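/- arXiv:1505.05280 — 10 statements merged into one kernel-verified Lean document; each statement's English description precedes it below -/
import Mathlib

section
/- For every odd natural number k and every real number α, the product ∏_{j=1}^{k} sin(π(2j−1)/(2k) − α) equals 2^{1−k} cos(kα). -/
open Real Finset

open Complex in
lemma prod_sub_pow_root (k : ℕ) (hk : k ≠ 0) (z : ℂ) :
    ∏ i ∈ Finset.range k, (z - Complex.exp (2 * ↑Real.pi * I / k) ^ i) = z ^ k - 1 := by
  have hζ : IsPrimitiveRoot (Complex.exp (2 * ↑Real.pi * I / k)) k :=
    Complex.isPrimitiveRoot_exp k hk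
  have hr : (Polynomial.X ^ k - 1 : Polynomial ℂ).roots
      = (Multiset.range k).map (Complex.exp (2 * ↑Real.pi * I / k) ^ ·) := by
    have h := hζ.nthRoots_eq (α := (1 : ℂ)) (a := (1 : ℂ)) (one_pow k)
    simpa [Polynomial.nthRoots, mul_one] using h
  have hmonic : (Polynomial.X ^ k - 1 : Polynomial ℂ).Monic := by
    simpa using Polynomial.monic_X_pow_sub_C (1 : ℂ) hk
  have hcard : Multiset.card (Polynomial.X ^ k - 1 : Polynomial ℂ).roots
      = (Polynomial.X ^ k - 1 : Polynomial ℂ).natDegree := by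
    rw [hr]
    have : (Polynomial.X ^ k - 1 : Polynomial ℂ) = Polynomial.X ^ k - Polynomial.C 1 := by simp
    simp [this, Polynomial.natDegree_X_pow_sub_C]
  have hp := Polynomial.prod_multiset_X_sub_C_of_monic_of_roots_card_eq hmonic hcard
  have := congrArg (Polynomial.eval z) hp
  rw [hr] at this
  simp [Polynomial.eval_multiset_prod, Multiset.map_map] at this
  rw [← this]
  rw [Finset.prod_eq_multiset_prod]
  simp [Finset.range_val]

open Complex in
lemma prod_one_sub_root (k : ℕ) (hk : k ≠ 0) (w : ℂ) (hw : w ≠ 0) :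
    ∏ i ∈ Finset.range k, (1 - w * Complex.exp (2 * ↑Real.pi * I / k) ^ i) = 1 - w ^ k := by
  have h1 : ∀ i ∈ Finset.range k,
      (1 - w * Complex.exp (2 * ↑Real.pi * I / k) ^ i)
        = w * (w⁻¹ - Complex.exp (2 * ↑Real.pi * I / k) ^ i) := by
    intro i _
    field_simp
  rw [Finset.prod_congr rfl h1, Finset.prod_mul_distrib, Finset.prod_const,
    Finset.card_range, prod_sub_pow_root k hk]
  field_simp
  rw [one_div, inv_pow, mul_sub, mul_inv_cancel₀ (pow_ne_zero _ hw), mul_one]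

open Complex in
lemma key_sin_prod (m : ℕ) (x : ℂ) :
    ∏ i ∈ Finset.range (m + 1), Complex.sin (x + i * ↑Real.pi / (m + 1)) =
      (2 : ℂ) ^ (-(m : ℤ)) * Complex.sin ((m + 1) * x) := by
  set k : ℕ := m + 1 with hk
  have hk0 : (k : ℂ) ≠ 0 := by exact Nat.cast_ne_zero.2 (Nat.succ_ne_zero m)
  have hc : ((m : ℂ) + 1) = (k : ℂ) := by rw [hk]; push_cast; ring
  rw [hc]
  set ζ : ℂ := Complex.exp (2 * ↑Real.pi * I / k) with hζ
  have hw : Complex.exp (2 * x * I) ≠ 0 := Complex.exp_ne_zero _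
  have step : ∀ i ∈ Finset.range k,
      Complex.sin (x + i * ↑Real.pi / k)
        = Complex.exp (-(x + i * ↑Real.pi / k) * I) * (1 - Complex.exp (2 * x * I) * ζ ^ i) * (I / 2) := by
    intro i _
    rw [Complex.sin]
    have h2 : Complex.exp ((x + i * ↑Real.pi / k) * I)
        = Complex.exp (-(x + i * ↑Real.pi / k) * I) * (Complex.exp (2 * x * I) * ζ ^ i) := by
      rw [hζ, ← Complex.exp_nat_mul, ← Complex.exp_add, ← Complex.exp_add]
      congr 1
      field_simp
      ring
    rw [h2]
    ring
  rw [Finset.prod_congr rfl step, Finset.prod_mul_distrib, Finset.prod_mul_distrib,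
    ← Complex.exp_sum, prod_one_sub_root k (Nat.succ_ne_zero m) _ hw,
    Finset.prod_const, Finset.card_range]
  have hgauss : (∑ i ∈ Finset.range k, (i : ℂ)) = k * (k - 1) / 2 := by
    have hnn : (∑ i ∈ Finset.range k, i) * 2 = (m + 1) * m := by
      rw [Finset.sum_range_id_mul_two]; simp [hk]
    have hc2 : ((∑ i ∈ Finset.range k, i : ℕ) : ℂ) * 2 = ((m : ℂ) + 1) * m := by
      exact_mod_cast congrArg (Nat.cast : ℕ → ℂ) hnn
    have hcast : (∑ i ∈ Finset.range k, (i : ℂ)) = ((∑ i ∈ Finset.range k, i : ℕ) : ℂ) := by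
      push_cast; rfl
    rw [hcast]
    have hrhs : ((k : ℂ) * ((k : ℂ) - 1) / 2) = ((m : ℂ) + 1) * m / 2 := by
      rw [hk]; push_cast; ring
    rw [hrhs]
    linear_combination hc2 / 2
  have hsum : (∑ i ∈ Finset.range k, (-(x + i * ↑Real.pi / k) * I))
      = -(k * x + (k - 1) * ↑Real.pi / 2) * I := by
    have hlin : ∀ i : ℕ, (-(x + (i : ℂ) * ↑Real.pi / k) * I)
        = -x * I + (-(↑Real.pi / k) * I) * i := fun i => by ring
    simp only [hlin]
    rw [Finset.sum_add_distrib, Finset.sum_const, Finset.card_range, ← Finset.mul_sum, hgauss]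
    field_simp
    ring
  rw [hsum]
  -- now pure scalar computation
  have hE : Complex.exp (-((k : ℂ) * x + ((k : ℂ) - 1) * ↑Real.pi / 2) * I)
      = Complex.exp (-(k : ℂ) * x * I) * (-I) ^ m := by
    have hmi : Complex.exp (-(↑Real.pi / 2) * I) = -I := by
      rw [Complex.exp_mul_I, Complex.cos_neg, Complex.sin_neg]
      have hq : (↑Real.pi / 2 : ℂ) = ((Real.pi / 2 : ℝ) : ℂ) := by push_cast; ring
      rw [hq, ← Complex.ofReal_cos, ← Complex.ofReal_sin, Real.cos_pi_div_two,
        Real.sin_pi_div_two]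
      simp
    rw [← hmi, ← Complex.exp_nat_mul, ← Complex.exp_add]
    congr 1
    have : ((k : ℂ) - 1) = (m : ℂ) := by push_cast [hk]; ring
    rw [this]
    ring
  have hwk : Complex.exp (2 * x * I) ^ k = Complex.exp ((k : ℂ) * x * I) ^ 2 := by
    rw [← Complex.exp_nat_mul, ← Complex.exp_nat_mul]
    congr 1
    push_cast
    ring
  rw [hE, hwk, Complex.sin]
  set E : ℂ := Complex.exp ((k : ℂ) * x * I) with hEdef
  have hE0 : E ≠ 0 := Complex.exp_ne_zero _
  have hEi : Complex.exp (-((k : ℂ) * x) * I) = E⁻¹ := by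
    rw [hEdef, ← Complex.exp_neg]
    congr 1
    ring
  have hEi2 : Complex.exp (-(k : ℂ) * x * I) = E⁻¹ := by rw [← hEi]; congr 1; ring
  rw [hEi, hEi2]
  have hpow' : ((-I) ^ m * (I / 2) ^ m : ℂ) = (1 / 2 : ℂ) ^ m := by
    rw [← mul_pow]
    congr 1
    linear_combination (-1 / 2 : ℂ) * Complex.I_sq
  have hhalf : ((2 : ℂ)) ^ (-(m : ℤ)) = (1 / 2 : ℂ) ^ m := by
    rw [one_div, inv_pow, ← zpow_natCast, ← zpow_neg]
  have h6 : E⁻¹ * (1 - E ^ 2) = E⁻¹ - E := by field_simp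
  have hIk : ((I / 2 : ℂ)) ^ k = (I / 2) ^ m * (I / 2) := by rw [hk, pow_succ]
  rw [hIk, hhalf]
  calc E⁻¹ * (-I) ^ m * (1 - E ^ 2) * ((I / 2) ^ m * (I / 2))
      = ((-I) ^ m * (I / 2) ^ m) * ((E⁻¹ * (1 - E ^ 2)) * (I / 2)) := by ring
    _ = (1 / 2 : ℂ) ^ m * ((E⁻¹ - E) * I / 2) := by rw [hpow', h6]; ring

theorem sin_prod_eq_cos (k : ℕ) (hk : Odd k) (α : ℝ) :
    ∏ j ∈ Finset.Icc 1 k, Real.sin (π * (2 * (j : ℝ) - 1) / (2 * k) - α)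
      = (2 : ℝ) ^ ((1 : ℤ) - (k : ℤ)) * Real.cos (k * α) := by
  obtain ⟨n, rfl⟩ := hk
  have hk0 : ((2 * n + 1 : ℕ) : ℂ) ≠ 0 := Nat.cast_ne_zero.mpr (Nat.succ_ne_zero _)
  rw [← Complex.ofReal_inj]
  push_cast
  rw [← Finset.Ico_add_one_right_eq_Icc, Finset.prod_Ico_eq_prod_range]
  norm_num
  have key := key_sin_prod (2 * n) ((↑π / (2 * ((2 * n : ℂ) + 1)) - (α : ℂ)))
  push_cast at key
  have hfac : ∀ i ∈ Finset.range (2 * n + 1),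
      Complex.sin (↑π * (2 * ((1 : ℂ) + i) - 1) / (2 * ((2 * n : ℂ) + 1)) - ↑α)
        = Complex.sin ((↑π / (2 * ((2 * n : ℂ) + 1)) - (α : ℂ)) + i * ↑π / ((2 * n : ℂ) + 1)) := by
    intro i _
    congr 1
    have h2 : ((2 * n : ℂ) + 1) ≠ 0 := by push_cast at hk0 ⊢; exact hk0
    field_simp
    ring
  rw [Finset.prod_congr rfl hfac, key]
  have h2 : ((2 * n : ℂ) + 1) ≠ 0 := by push_cast at hk0 ⊢; exact hk0
  have harg : ((2 * n : ℂ) + 1) * (↑π / (2 * ((2 * n : ℂ) + 1)) - (α : ℂ))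
      = ↑π / 2 - ((2 * n : ℂ) + 1) * ↑α := by field_simp
  rw [harg, Complex.sin_pi_div_two_sub]
  congr 1
  rw [zpow_neg]
end

section
/- Let h be a natural number and Q(x₁,x₂) = Σ_{j=0}^{h} c_j x₁^j x₂^{h−j} be a homogeneous polynomial of degree at most h in two real variables with real coefficients. If there exist an angle θ̄ ∈ [0,2π) and an odd natural number k with k > h such that Q(cos(θ̄ + 2πj/k), sin(θ̄ + 2πj/k)) = 0 for every j = 0, 1, …, k−1, then Q is identically zero, i.e. c_j = 0 for all j. -/
open Real Finset

open Polynomial in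
noncomputable def auxP (h : ℕ) (c : ℕ → ℝ) : Polynomial ℂ :=
  ∑ i ∈ Finset.range (h + 1),
    C (c i : ℂ) * ((X + 1) * C (2⁻¹ : ℂ)) ^ i *
      ((X - 1) * C ((2 * Complex.I)⁻¹)) ^ (h - i)

open Polynomial in
lemma auxP_eval (h : ℕ) (c : ℕ → ℝ) (w : ℂ) :
    (auxP h c).eval w =
      ∑ i ∈ Finset.range (h + 1),
        (c i : ℂ) * ((w + 1) * 2⁻¹) ^ i * ((w - 1) * (2 * Complex.I)⁻¹) ^ (h - i) := by
  simp [auxP, eval_finset_sum]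

open Polynomial in
lemma auxP_natDegree_le (h : ℕ) (c : ℕ → ℝ) : (auxP h c).natDegree ≤ h := by
  refine (Polynomial.natDegree_sum_le _ _).trans ?_
  rw [Finset.fold_max_le]
  refine ⟨Nat.zero_le _, fun i hi => ?_⟩
  simp only [Finset.mem_range] at hi
  have hA : (((X : ℂ[X]) + 1) * C (2⁻¹ : ℂ)).natDegree ≤ 1 := by
    have := natDegree_mul_le_of_le (m := 1) (n := 0)
      ((natDegree_add_le (X : ℂ[X]) 1).trans (by simp)) (natDegree_C (2⁻¹ : ℂ)).le
    simpa using this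
  have hB : (((X : ℂ[X]) - 1) * C ((2 * Complex.I)⁻¹)).natDegree ≤ 1 := by
    have := natDegree_mul_le_of_le (m := 1) (n := 0)
      ((natDegree_sub_le (X : ℂ[X]) 1).trans (by simp)) (natDegree_C ((2 * Complex.I)⁻¹)).le
    simpa using this
  simp only [Function.comp_apply]
  calc (C ((c i : ℂ)) * ((X + 1) * C (2⁻¹ : ℂ)) ^ i *
      ((X - 1) * C ((2 * Complex.I)⁻¹)) ^ (h - i)).natDegree
      ≤ (0 + i * 1) + (h - i) * 1 :=
        natDegree_mul_le_of_le
          (natDegree_mul_le_of_le (by simp) (natDegree_pow_le_of_le _ hA))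
          (natDegree_pow_le_of_le _ hB)
    _ ≤ h := by omega

open Polynomial in
lemma auxP_eval_exp (h : ℕ) (c : ℕ → ℝ) (α : ℝ) :
    (auxP h c).eval (Complex.exp (2 * α * Complex.I)) =
      Complex.exp (α * Complex.I) ^ h *
        ∑ i ∈ Finset.range (h + 1),
          (c i : ℂ) * (Real.cos α : ℂ) ^ i * (Real.sin α : ℂ) ^ (h - i) := by
  set z := Complex.exp (α * Complex.I) with hz
  have hz2 : Complex.exp (2 * α * Complex.I) = z ^ 2 := by
    rw [hz, ← Complex.exp_nat_mul]
    norm_num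
    ring_nf
  have pyth : (Real.cos α : ℂ) ^ 2 + (Real.sin α : ℂ) ^ 2 = 1 := by
    norm_cast
    exact Real.cos_sq_add_sin_sq α
  have hzz : z = (Real.cos α : ℂ) + (Real.sin α : ℂ) * Complex.I := by
    rw [hz, Complex.exp_mul_I, Complex.ofReal_cos, Complex.ofReal_sin]
  have hplus : (z ^ 2 + 1) * 2⁻¹ = (Real.cos α : ℂ) * z := by
    rw [hzz]
    linear_combination (2⁻¹ : ℂ) * ((Real.sin α : ℂ) ^ 2 * Complex.I_sq - pyth)
  have hminus0 : z ^ 2 - 1 = 2 * Complex.I * (Real.sin α : ℂ) * z := by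
    rw [hzz]
    linear_combination -(Real.sin α : ℂ) ^ 2 * Complex.I_sq + pyth
  have hminus : (z ^ 2 - 1) * (2 * Complex.I)⁻¹ = (Real.sin α : ℂ) * z := by
    rw [hminus0]
    field_simp
  rw [auxP_eval, hz2, Finset.mul_sum]
  refine Finset.sum_congr rfl fun i hi => ?_
  simp only [Finset.mem_range] at hi
  rw [hplus, hminus, mul_pow, mul_pow]
  have : z ^ i * z ^ (h - i) = z ^ h := by
    rw [← pow_add]
    congr 1
    omega
  calc (c i : ℂ) * ((Real.cos α : ℂ) ^ i * z ^ i) *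
      ((Real.sin α : ℂ) ^ (h - i) * z ^ (h - i))
      = (z ^ i * z ^ (h - i)) * ((c i : ℂ) * (Real.cos α : ℂ) ^ i *
          (Real.sin α : ℂ) ^ (h - i)) := by ring
    _ = z ^ h * ((c i : ℂ) * (Real.cos α : ℂ) ^ i * (Real.sin α : ℂ) ^ (h - i)) := by
        rw [this]

theorem homogeneous_poly_vanishing_on_k_directions (h : ℕ) (c : ℕ → ℝ)
    (θ : ℝ) (hθ₁ : 0 ≤ θ) (hθ₂ : θ < 2 * π)
    (k : ℕ) (hk : Odd k) (hkh : k > h)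
    (hvanish : ∀ j : ℕ, j < k →
      ∑ i ∈ Finset.range (h + 1),
        c i * Real.cos (θ + 2 * π * (j : ℝ) / k) ^ i
            * Real.sin (θ + 2 * π * (j : ℝ) / k) ^ (h - i) = 0) :
    ∀ i : ℕ, i ≤ h → c i = 0 := by
  have hkpos : 0 < k := lt_of_le_of_lt (Nat.zero_le _) hkh
  have hkR : (k : ℝ) ≠ 0 := Nat.cast_ne_zero.mpr hkpos.ne'
  have hπ : (0:ℝ) < π := Real.pi_pos
  set α : ℕ → ℝ := fun j => θ + 2 * π * (j : ℝ) / k with hα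
  set r : Fin k → ℂ := fun j => Complex.exp (2 * (α j : ℝ) * Complex.I) with hr
  have hroots : ∀ j : Fin k, (auxP h c).eval (r j) = 0 := by
    intro j
    rw [hr]
    simp only
    rw [auxP_eval_exp]
    have hsum : ∑ i ∈ Finset.range (h + 1),
        ((c i : ℂ) * (Real.cos (α (j : ℕ)) : ℂ) ^ i *
          (Real.sin (α (j : ℕ)) : ℂ) ^ (h - i)) = 0 := by
      have hv := hvanish (j : ℕ) j.2
      rw [hα] at *
      exact_mod_cast congrArg (fun x : ℝ => (x : ℂ)) hv
    rw [hsum, mul_zero]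
  have hinj : Function.Injective r := by
    intro a b hab
    rw [hr] at hab
    simp only at hab
    rw [Complex.exp_eq_exp_iff_exists_int] at hab
    obtain ⟨n, hn⟩ := hab
    have hI : ((2 * α (a:ℕ) : ℝ) : ℂ) * Complex.I =
        ((2 * α (b:ℕ) + n * (2 * π) : ℝ) : ℂ) * Complex.I := by
      push_cast
      linear_combination hn
    have hreal : 2 * α (a:ℕ) = 2 * α (b:ℕ) + n * (2 * π) :=
      Complex.ofReal_injective (mul_right_cancel₀ Complex.I_ne_zero hI)
    have hint : 2 * ((a:ℕ):ℤ) = 2 * ((b:ℕ):ℤ) + n * k := by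
      have hR : 2 * ((a:ℕ):ℝ) = 2 * ((b:ℕ):ℝ) + n * k := by
        rw [hα] at hreal
        simp only at hreal
        have h1 : 2 * π * ((a:ℕ):ℝ) / k = 2 * π * ((b:ℕ):ℝ) / k + n * π := by
          linarith
        have h2 := congrArg (fun x : ℝ => x * k / π) h1
        field_simp at h2
        have h3 : π * (2 * ((a:ℕ):ℝ)) = π * (2 * ((b:ℕ):ℝ) + n * k) := by linear_combination π * h2
        exact mul_left_cancel₀ hπ.ne' h3
      exact_mod_cast hR
    obtain ⟨m, hm⟩ := hk
    -- n is even
    obtain ⟨n', hn'⟩ : ∃ n', n = 2 * n' := by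
      have hev : Even (n * k) := ⟨((a:ℕ):ℤ) - ((b:ℕ):ℤ), by linarith⟩
      rcases Int.even_mul.mp hev with he | he
      · obtain ⟨x, hx⟩ := he
        exact ⟨x, by omega⟩
      · exfalso
        obtain ⟨x, hx⟩ := he
        have : (k:ℤ) = 2 * m + 1 := by exact_mod_cast hm
        omega
    have hab' : ((a:ℕ):ℤ) - ((b:ℕ):ℤ) = n' * k := by
      rw [hn'] at hint
      linarith
    have hak : ((a:ℕ):ℤ) < k := by exact_mod_cast a.2
    have hbk : ((b:ℕ):ℤ) < k := by exact_mod_cast b.2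
    have ha0 : (0:ℤ) ≤ ((a:ℕ):ℤ) := Int.natCast_nonneg _
    have hb0 : (0:ℤ) ≤ ((b:ℕ):ℤ) := Int.natCast_nonneg _
    have hkZ : (0:ℤ) < k := by exact_mod_cast hkpos
    have hn0 : n' = 0 := by
      rcases lt_trichotomy n' 0 with hlt | heq | hgt
      · have : n' * k ≤ (-1) * k :=
          mul_le_mul_of_nonneg_right (by omega) hkZ.le
        linarith
      · exact heq
      · have : (1:ℤ) * k ≤ n' * k :=
          mul_le_mul_of_nonneg_right (by omega) hkZ.le
        linarith
    rw [hn0, zero_mul] at hab'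
    have : ((a:ℕ):ℤ) = ((b:ℕ):ℤ) := by omega
    exact Fin.ext (by exact_mod_cast this)
  have hP : auxP h c = 0 := by
    refine Polynomial.eq_zero_of_natDegree_lt_card_of_eval_eq_zero _ hinj hroots ?_
    calc (auxP h c).natDegree ≤ h := auxP_natDegree_le h c
      _ < k := hkh
      _ = Fintype.card (Fin k) := (Fintype.card_fin k).symm
  have hsum0 : ∀ t : ℝ, ∑ i ∈ Finset.range (h + 1), c i * t ^ i = 0 := by
    intro t
    have hd : ((t : ℂ) - Complex.I) ≠ 0 := by
      intro H
      have := congrArg Complex.im H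
      simp at this
    have hev := auxP_eval h c (((t : ℂ) + Complex.I) / ((t : ℂ) - Complex.I))
    rw [hP] at hev
    simp only [Polynomial.eval_zero] at hev
    have h1 : ((((t : ℂ) + Complex.I) / ((t : ℂ) - Complex.I)) + 1) * 2⁻¹ =
        (t : ℂ) / ((t : ℂ) - Complex.I) := by
      field_simp
      ring
    have h2 : ((((t : ℂ) + Complex.I) / ((t : ℂ) - Complex.I)) - 1) * (2 * Complex.I)⁻¹ =
        1 / ((t : ℂ) - Complex.I) := by
      rw [div_sub_one hd]
      field_simp
      ring
    rw [h1, h2] at hev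
    have key : ∑ i ∈ Finset.range (h + 1), (c i : ℂ) * (t : ℂ) ^ i = 0 := by
      have hmul := congrArg (· * ((t : ℂ) - Complex.I) ^ h) hev.symm
      simp only [zero_mul, Finset.sum_mul] at hmul
      rw [← hmul]
      refine Finset.sum_congr rfl fun i hi => ?_
      simp only [Finset.mem_range] at hi
      have hpow : ((t : ℂ) - Complex.I) ^ h =
          ((t : ℂ) - Complex.I) ^ i * ((t : ℂ) - Complex.I) ^ (h - i) := by
        rw [← pow_add]; congr 1; omega
      rw [hpow, div_pow, div_pow]
      field_simp
      rw [one_pow, mul_one]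
    exact_mod_cast key
  set q : Polynomial ℝ := ∑ i ∈ Finset.range (h + 1), Polynomial.C (c i) * Polynomial.X ^ i
    with hq
  have hq0 : q = 0 := by
    apply Polynomial.funext
    intro t
    rw [hq]
    simp only [Polynomial.eval_finset_sum, Polynomial.eval_mul, Polynomial.eval_pow,
      Polynomial.eval_C, Polynomial.eval_X, Polynomial.eval_zero]
    exact hsum0 t
  intro i hi
  have hco := congrArg (fun p => Polynomial.coeff p i) hq0
  simp only [hq, Polynomial.finset_sum_coeff, Polynomial.coeff_C_mul, Polynomial.coeff_X_pow,
    Polynomial.coeff_zero, mul_ite, mul_one, mul_zero] at hco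
  rw [Finset.sum_ite_eq (Finset.range (h + 1)) i c] at hco
  · rwa [if_pos (Finset.mem_range.mpr (by omega))] at hco
end

section
/- Let k be an odd natural number. Then for every j ∈ {0, 1, …, k−1} one has cos(2πj/k) ≠ 0, and the k real numbers tan(2πj/k), j = 0, 1, …, k−1, are pairwise distinct. -/
open Real

theorem cos_ne_zero_and_tan_injective_of_odd (k : ℕ) (hk : Odd k) :
    (∀ j : ℕ, j < k → Real.cos (2 * π * (j : ℝ) / k) ≠ 0) ∧
    (∀ i j : ℕ, i < k → j < k → i ≠ j →
      Real.tan (2 * π * (i : ℝ) / k) ≠ Real.tan (2 * π * (j : ℝ) / k)) := by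
  have hk0 : 0 < k := hk.pos
  have hkR : (k : ℝ) ≠ 0 := by positivity
  have hπ : (0 : ℝ) < π := Real.pi_pos
  have hkZ : (0 : ℤ) < (k : ℤ) := by exact_mod_cast hk0
  have hkodd : Odd (k : ℤ) := by exact_mod_cast hk
  have hcos : ∀ j : ℕ, j < k → Real.cos (2 * π * (j : ℝ) / k) ≠ 0 := by
    intro j hj h
    rw [Real.cos_eq_zero_iff] at h
    obtain ⟨n, hn⟩ := h
    have key : (4 * j : ℝ) = ((2 * n + 1) * k : ℤ) := by
      field_simp at hn
      push_cast
      nlinarith [hn, hπ]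
    have key' : (4 * j : ℤ) = (2 * n + 1) * k := by exact_mod_cast key
    have ho : Odd ((4 * j : ℤ)) := key' ▸ (odd_two_mul_add_one n).mul hkodd
    obtain ⟨c, hc⟩ := ho
    omega
  refine ⟨hcos, ?_⟩
  intro i j hi hj hij h
  have hci := hcos i hi
  have hcj := hcos j hj
  have hsin : Real.sin (2 * π * (i : ℝ) / k - 2 * π * (j : ℝ) / k) = 0 := by
    rw [Real.sin_sub]
    rw [Real.tan_eq_sin_div_cos, Real.tan_eq_sin_div_cos, div_eq_div_iff hci hcj] at h
    linarith
  rw [Real.sin_eq_zero_iff] at hsin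
  obtain ⟨n, hn⟩ := hsin
  have key : ((n * k : ℤ) : ℝ) = (2 * i : ℤ) - (2 * j : ℤ) := by
    field_simp at hn
    push_cast
    nlinarith [hn, hπ]
  have key' : n * (k : ℤ) = 2 * (i : ℤ) - 2 * (j : ℤ) := by exact_mod_cast key
  have habs : |n * (k : ℤ)| < 2 * (k : ℤ) := by
    rw [abs_lt]
    constructor <;> (rw [key']; omega)
  rw [abs_mul, abs_of_pos hkZ] at habs
  have hn2 : |n| < 2 := lt_of_mul_lt_mul_right habs hkZ.le
  have he : Even n := by
    have hev : Even (n * (k : ℤ)) := by rw [key']; exact ⟨(i : ℤ) - j, by ring⟩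
    rcases Int.even_mul.mp hev with h' | h'
    · exact h'
    · exact absurd h' (Int.not_even_iff_odd.mpr hkodd)
  obtain ⟨t, ht⟩ := he
  have hn0 : n = 0 := by rw [abs_lt] at hn2; omega
  rw [hn0] at key'
  omega
end

section
/- Let k be an odd natural number, c_0, …, c_k real numbers with c_0 > 0, and let g(α) = Σ_{j=0}^{k} c_j (cos α)^{k−j} (sin α)^j. Assume that g(α + 2π/k) = g(α) and g(2π − α) = g(α) for all real α. Then for all real α, g(α) = (c_0 / ∏_{ℓ=1}^{k} sin(π(2ℓ−1)/(2k))) · ∏_{j=1}^{k} sin(π(2j−1)/(2k) − α). -/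
open Real Finset

theorem trig_poly_factorization (k : ℕ) (hk : Odd k) (c : ℕ → ℝ) (hc0 : c 0 > 0)
    (g : ℝ → ℝ)
    (hg : ∀ α : ℝ, g α = ∑ j ∈ Finset.range (k + 1),
      c j * Real.cos α ^ (k - j) * Real.sin α ^ j)
    (hper : ∀ α : ℝ, g (α + 2 * π / k) = g α)
    (hsym : ∀ α : ℝ, g (2 * π - α) = g α) :
    ∀ α : ℝ, g α
      = (c 0 / ∏ l ∈ Finset.Icc 1 k, Real.sin (π * (2 * (l : ℝ) - 1) / (2 * k)))
        * ∏ j ∈ Finset.Icc 1 k, Real.sin (π * (2 * (j : ℝ) - 1) / (2 * k) - α) := by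
  classical
  obtain ⟨m, hm⟩ := hk
  have hk1 : 1 ≤ k := by omega
  have hkR0 : (0:ℝ) < k := by exact_mod_cast hk1
  have hkR : (k:ℝ) ≠ 0 := ne_of_gt hkR0
  have hmk : (k:ℝ) = 2 * m + 1 := by exact_mod_cast hm
  have h2k : (0:ℝ) < 2 * k := by linarith
  set A : ℕ → ℝ := fun j => π * (2 * (j : ℝ) - 1) / (2 * (k:ℝ)) with hA
  set mid : ℕ := m + 1 with hmid
  have hmidmem : mid ∈ Finset.Icc 1 k := by
    simp only [Finset.mem_Icc]; omega
  have hAmid : A mid = π / 2 := by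
    simp only [hA, hmid]
    push_cast
    rw [div_eq_div_iff (ne_of_gt h2k) (by norm_num : (2:ℝ) ≠ 0)]
    rw [hmk]; ring
  -- basic bounds on A
  have hApos : ∀ j, 1 ≤ j → 0 < A j := by
    intro j hj
    apply div_pos _ h2k
    have : (1:ℝ) ≤ j := by exact_mod_cast hj
    nlinarith [pi_pos]
  have hAltpi : ∀ j, j ≤ k → A j < π := by
    intro j hj
    have : (j:ℝ) ≤ k := by exact_mod_cast hj
    rw [div_lt_iff₀ h2k]
    nlinarith [pi_pos]
  have hAmono : ∀ i j : ℕ, i < j → A i < A j := by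
    intro i j hij
    have : (i:ℝ) < j := by exact_mod_cast hij
    simp only [hA]
    rw [div_lt_div_iff₀ h2k h2k]
    nlinarith [mul_pos (mul_pos pi_pos h2k) (sub_pos.mpr this)]
  have hAlow : ∀ j, j ≤ m → A j < π / 2 := by
    intro j hj
    have : (j:ℝ) ≤ m := by exact_mod_cast hj
    rw [div_lt_div_iff₀ h2k (by norm_num : (0:ℝ) < 2)]
    nlinarith [pi_pos]
  have hAhigh : ∀ j, mid < j → π / 2 < A j := by
    intro j hj
    have : (mid:ℝ) < j := by exact_mod_cast hj
    have hm' : (mid:ℝ) = m + 1 := by exact_mod_cast rfl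
    rw [div_lt_div_iff₀ (by norm_num : (0:ℝ) < 2) h2k]
    nlinarith [pi_pos]
  -- symmetries of g
  have gpin : ∀ α : ℝ, g (α + π) = -g α := by
    intro α
    rw [hg, hg, ← Finset.sum_neg_distrib]
    apply Finset.sum_congr rfl
    intro j hj
    have hjk : j ≤ k := by
      have := Finset.mem_range.mp hj; omega
    have hsign : (-1:ℝ) ^ (k - j) * (-1:ℝ) ^ j = -1 := by
      rw [← pow_add, Nat.sub_add_cancel hjk, Odd.neg_one_pow ⟨m, hm⟩]
    rw [Real.cos_add_pi, Real.sin_add_pi, neg_pow, neg_pow]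
    linear_combination (c j * Real.cos α ^ (k - j) * Real.sin α ^ j) * hsign
  have gper : ∀ (n : ℕ) (α : ℝ), g (α + n * (2 * π / k)) = g α := by
    intro n
    induction n with
    | zero => intro α; simp
    | succ n ih =>
      intro α
      have h1 : α + ((n+1 : ℕ):ℝ) * (2 * π / k) = (α + n * (2 * π / k)) + 2 * π / k := by
        push_cast; ring
      rw [h1, hper, ih]
  have geven : ∀ α : ℝ, g (-α) = g α := by
    intro α
    have h1 := gper k (-α)
    have h2 : -α + (k:ℝ) * (2 * π / k) = 2 * π - α := by
      field_simp; ring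
    rw [h2] at h1
    rw [← h1, hsym]
  have gantip : ∀ α : ℝ, g (α + π / k) = -g α := by
    intro α
    have h1 := gper m (α + π / k)
    have h2 : α + π / k + (m:ℝ) * (2 * π / k) = α + π := by
      field_simp
      rw [hmk]; ring
    rw [h2, gpin] at h1
    exact h1.symm
  have gz : ∀ n : ℕ, g (π / (2 * k) + n * (π / k)) = 0 := by
    intro n
    induction n with
    | zero =>
      have h1 := gantip (-(π / (2 * k)))
      have h2 : -(π / (2 * k)) + π / k = π / (2 * k) := by
        field_simp; ring
      rw [h2, geven] at h1
      simp only [Nat.cast_zero, zero_mul, add_zero]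
      linarith
    | succ n ih =>
      have h1 : π / (2 * k) + ((n+1 : ℕ):ℝ) * (π / k)
          = (π / (2 * k) + n * (π / k)) + π / k := by push_cast; ring
      rw [h1, gantip, ih, neg_zero]
  have gzeros : ∀ j ∈ Finset.Icc 1 k, g (A j) = 0 := by
    intro j hj
    have hj1 : 1 ≤ j := (Finset.mem_Icc.mp hj).1
    have h1 : A j = π / (2 * k) + ((j - 1 : ℕ):ℝ) * (π / k) := by
      have : ((j - 1 : ℕ):ℝ) = (j:ℝ) - 1 := by
        push_cast [Nat.cast_sub hj1]; ring
      rw [this, hA]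
      field_simp
      ring
    rw [h1]; exact gz (j - 1)
  -- c k = 0
  have gpi2 : g (π / 2) = c k := by
    rw [hg, Real.cos_pi_div_two, Real.sin_pi_div_two]
    rw [Finset.sum_eq_single_of_mem k (Finset.self_mem_range_succ k)]
    · simp
    · intro j hj hjk
      have : k - j ≠ 0 := by
        have := Finset.mem_range.mp hj; omega
      rw [zero_pow this]; ring
  have hck : c k = 0 := by
    rw [← gpi2, ← hAmid]; exact gzeros mid hmidmem
  -- polynomials
  set pg : Polynomial ℝ := ∑ j ∈ Finset.range (k + 1), Polynomial.C (c j) * Polynomial.X ^ j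
    with hpg
  set ph : Polynomial ℝ := ∏ j ∈ Finset.Icc 1 k,
      (Polynomial.C (Real.sin (A j)) - Polynomial.C (Real.cos (A j)) * Polynomial.X) with hph
  set h0 : ℝ := ∏ l ∈ Finset.Icc 1 k, Real.sin (A l) with hh0
  set P : Polynomial ℝ := Polynomial.C h0 * pg - Polynomial.C (c 0) * ph with hP
  have geq : ∀ α : ℝ, Real.cos α ≠ 0 → g α = Real.cos α ^ k * pg.eval (Real.tan α) := by
    intro α hα
    rw [hg, hpg, Polynomial.eval_finset_sum, Finset.mul_sum]
    apply Finset.sum_congr rfl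
    intro j hj
    have hjk : j ≤ k := by
      have := Finset.mem_range.mp hj; omega
    have htc := Real.tan_mul_cos hα
    simp only [Polynomial.eval_mul, Polynomial.eval_C, Polynomial.eval_pow, Polynomial.eval_X]
    calc c j * Real.cos α ^ (k - j) * Real.sin α ^ j
        = c j * Real.cos α ^ (k - j) * (Real.tan α * Real.cos α) ^ j := by rw [htc]
      _ = Real.cos α ^ (k - j) * Real.cos α ^ j * (c j * Real.tan α ^ j) := by ring
      _ = Real.cos α ^ k * (c j * Real.tan α ^ j) := by
          rw [← pow_add, Nat.sub_add_cancel hjk]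
  have heqh : ∀ α : ℝ, Real.cos α ≠ 0 →
      (∏ j ∈ Finset.Icc 1 k, Real.sin (A j - α)) = Real.cos α ^ k * ph.eval (Real.tan α) := by
    intro α hα
    rw [hph, Polynomial.eval_prod]
    have hcard : (Finset.Icc 1 k).card = k := by
      rw [Nat.card_Icc]; omega
    have hck' : Real.cos α ^ k = ∏ _j ∈ Finset.Icc 1 k, Real.cos α := by
      rw [Finset.prod_const, hcard]
    rw [hck', ← Finset.prod_mul_distrib]
    apply Finset.prod_congr rfl
    intro j _
    have htc := Real.tan_mul_cos hα
    simp only [Polynomial.eval_sub, Polynomial.eval_mul, Polynomial.eval_C, Polynomial.eval_X]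
    rw [Real.sin_sub]
    linear_combination Real.cos (A j) * htc
  -- cos (A j) ≠ 0 for j ≠ mid
  have hcosne : ∀ j ∈ Finset.Icc 1 k, j ≠ mid → Real.cos (A j) ≠ 0 := by
    intro j hj hjm hc
    obtain ⟨n, hn⟩ := Real.cos_eq_zero_iff.mp hc
    obtain ⟨hj1, hjk⟩ := Finset.mem_Icc.mp hj
    have h1 : 0 < A j := hApos j hj1
    have h2 : A j < π := hAltpi j hjk
    have hn0 : n = 0 := by
      by_contra hn0
      rcases lt_or_gt_of_ne hn0 with h | h
      · have : (n:ℝ) ≤ -1 := by exact_mod_cast Int.le_sub_one_of_lt h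
        nlinarith [pi_pos]
      · have : (1:ℝ) ≤ n := by exact_mod_cast h
        nlinarith [pi_pos]
    rw [hn0] at hn
    have hAj : A j = π / 2 := by rw [hn]; push_cast; ring
    rw [← hAmid] at hAj
    rcases Nat.lt_trichotomy j mid with h | h | h
    · exact absurd hAj (ne_of_lt (hAmono j mid h))
    · exact hjm h
    · exact absurd hAj.symm (ne_of_lt (hAmono mid j h))
  have hcosk : ∀ α : ℝ, Real.cos α ≠ 0 → Real.cos α ^ k ≠ 0 := fun α hα => pow_ne_zero _ hα
  -- eval of P at roots
  have hpgroot : ∀ j ∈ Finset.Icc 1 k, j ≠ mid → pg.eval (Real.tan (A j)) = 0 := by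
    intro j hj hjm
    have hα := hcosne j hj hjm
    have h1 := geq (A j) hα
    rw [gzeros j hj] at h1
    exact (mul_eq_zero.mp h1.symm).resolve_left (hcosk _ hα)
  have hphroot : ∀ j ∈ Finset.Icc 1 k, j ≠ mid → ph.eval (Real.tan (A j)) = 0 := by
    intro j hj hjm
    have hα := hcosne j hj hjm
    have h1 := heqh (A j) hα
    have h2 : (∏ i ∈ Finset.Icc 1 k, Real.sin (A i - A j)) = 0 := by
      apply Finset.prod_eq_zero hj
      rw [sub_self, Real.sin_zero]
    rw [h2] at h1
    exact (mul_eq_zero.mp h1.symm).resolve_left (hcosk _ hα)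
  have hpg0 : pg.eval 0 = c 0 := by
    rw [hpg, Polynomial.eval_finset_sum]
    rw [Finset.sum_eq_single_of_mem 0 (Finset.mem_range.mpr (by omega))]
    · simp
    · intro j _ hj0
      simp [zero_pow hj0]
  have hph0 : ph.eval 0 = h0 := by
    rw [hph, Polynomial.eval_prod, hh0]
    apply Finset.prod_congr rfl
    intro j _
    simp
  have hProots : ∀ j ∈ Finset.Icc 1 k, j ≠ mid → P.eval (Real.tan (A j)) = 0 := by
    intro j hj hjm
    rw [hP]
    simp [hpgroot j hj hjm, hphroot j hj hjm]
  have hP0 : P.eval 0 = 0 := by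
    rw [hP]; simp [hpg0, hph0]; ring
  -- the root set
  set s : Finset ℝ :=
    insert 0 (((Finset.Icc 1 k).erase mid).image (fun j => Real.tan (A j))) with hs
  -- injectivity
  set B : ℕ → ℝ := fun j => if j ≤ m then A j else A j - π with hB
  have htanB : ∀ j : ℕ, Real.tan (A j) = Real.tan (B j) := by
    intro j
    by_cases h : j ≤ m
    · simp [hB, h]
    · simp only [hB, h, if_false]
      exact (Real.tan_periodic.sub_eq (A j)).symm
  have hBmem : ∀ j ∈ Finset.Icc 1 k, j ≠ mid → B j ∈ Set.Ioo (-(π/2)) (π/2) := by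
    intro j hj hjm
    obtain ⟨hj1, hjk⟩ := Finset.mem_Icc.mp hj
    by_cases h : j ≤ m
    · simp only [hB, h, if_true]
      constructor
      · have := hApos j hj1; linarith [pi_pos]
      · exact hAlow j h
    · have hmlt : mid < j := by omega
      simp only [hB, h, if_false]
      refine ⟨?_, ?_⟩
      · have := hAhigh j hmlt
        linarith
      · have := hAltpi j hjk
        linarith [pi_pos]
  have hBne : ∀ j ∈ Finset.Icc 1 k, j ≠ mid → B j ≠ 0 := by
    intro j hj hjm
    obtain ⟨hj1, hjk⟩ := Finset.mem_Icc.mp hj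
    by_cases h : j ≤ m
    · simp only [hB, h, if_true]
      exact ne_of_gt (hApos j hj1)
    · have hmlt : mid < j := by omega
      simp only [hB, h, if_false]
      have := hAltpi j hjk
      intro hz
      linarith [hz]
  have hmem0 : (0:ℝ) ∈ Set.Ioo (-(π/2)) (π/2) := by
    constructor <;> [linarith [pi_pos]; linarith [pi_pos]]
  have htanne : ∀ j ∈ Finset.Icc 1 k, j ≠ mid → Real.tan (A j) ≠ 0 := by
    intro j hj hjm hz
    rw [htanB j] at hz
    have := Real.injOn_tan (hBmem j hj hjm) hmem0 (by rw [hz, Real.tan_zero])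
    exact hBne j hj hjm this
  have hinj : Set.InjOn (fun j => Real.tan (A j)) ↑((Finset.Icc 1 k).erase mid) := by
    intro i hi j hj hij
    simp only [Finset.coe_erase, Set.mem_diff, Finset.mem_coe, Set.mem_singleton_iff] at hi hj
    obtain ⟨hi', him⟩ := hi
    obtain ⟨hj', hjm⟩ := hj
    simp only at hij
    rw [htanB i, htanB j] at hij
    have hBeq : B i = B j :=
      Real.injOn_tan (hBmem i hi' him) (hBmem j hj' hjm) hij
    have hiA : ∀ a b : ℕ, A a = A b → a = b := by
      intro a b hab
      rcases Nat.lt_trichotomy a b with h | h | h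
      · exact absurd hab (ne_of_lt (hAmono a b h))
      · exact h
      · exact absurd hab.symm (ne_of_lt (hAmono b a h))
    obtain ⟨hi1, hik⟩ := Finset.mem_Icc.mp hi'
    obtain ⟨hj1, hjk⟩ := Finset.mem_Icc.mp hj'
    by_cases ha : i ≤ m <;> by_cases hb : j ≤ m
    · simp only [hB, ha, hb, if_true] at hBeq
      exact hiA i j hBeq
    · exfalso
      simp only [hB, ha, hb, if_true, if_false] at hBeq
      have h1 : 0 < A i := hApos i hi1
      have h2 : A j < π := hAltpi j hjk
      linarith
    · exfalso
      simp only [hB, ha, hb, if_true, if_false] at hBeq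
      have h1 : 0 < A j := hApos j hj1
      have h2 : A i < π := hAltpi i hik
      linarith
    · simp only [hB, ha, hb, if_false] at hBeq
      have : A i = A j := by linarith
      exact hiA i j this
  have hscard : s.card = k := by
    rw [hs]
    rw [Finset.card_insert_of_notMem]
    · rw [Finset.card_image_of_injOn hinj, Finset.card_erase_of_mem hmidmem, Nat.card_Icc]
      omega
    · intro h0mem
      obtain ⟨j, hj, hjt⟩ := Finset.mem_image.mp h0mem
      obtain ⟨hjm, hj'⟩ := Finset.mem_erase.mp hj
      exact htanne j hj' hjm hjt
  -- degree bound
  have hpgdeg : pg.natDegree ≤ k - 1 := by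
    have h1 : pg = ∑ j ∈ Finset.range k, Polynomial.C (c j) * Polynomial.X ^ j := by
      rw [hpg, Finset.sum_range_succ, hck]
      simp
    rw [h1]
    apply Polynomial.natDegree_sum_le_of_forall_le
    intro j hj
    refine le_trans (Polynomial.natDegree_C_mul_X_pow_le _ _) ?_
    have := Finset.mem_range.mp hj; omega
  have hphdeg : ph.natDegree ≤ k - 1 := by
    have hmidf : Polynomial.C (Real.sin (A mid)) - Polynomial.C (Real.cos (A mid)) * Polynomial.X
        = 1 := by
      rw [hAmid, Real.sin_pi_div_two, Real.cos_pi_div_two]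
      simp
    have h1 : ph = ∏ j ∈ (Finset.Icc 1 k).erase mid,
        (Polynomial.C (Real.sin (A j)) - Polynomial.C (Real.cos (A j)) * Polynomial.X) := by
      rw [hph, ← Finset.mul_prod_erase _ _ hmidmem, hmidf, one_mul]
    rw [h1]
    refine le_trans (Polynomial.natDegree_prod_le _ _) ?_
    have h2 : ∀ j ∈ (Finset.Icc 1 k).erase mid,
        (Polynomial.C (Real.sin (A j)) - Polynomial.C (Real.cos (A j)) * Polynomial.X).natDegree
          ≤ 1 := by
      intro j _
      refine le_trans (Polynomial.natDegree_sub_le _ _) ?_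
      simp only [Polynomial.natDegree_C, max_le_iff]
      constructor
      · omega
      · exact le_trans (Polynomial.natDegree_C_mul_le _ _) Polynomial.natDegree_X_le
    refine le_trans (Finset.sum_le_sum h2) ?_
    rw [Finset.sum_const, smul_eq_mul, mul_one, Finset.card_erase_of_mem hmidmem, Nat.card_Icc]
    omega
  have hPdeg : P.natDegree < k := by
    rw [hP]
    have h1 : (Polynomial.C h0 * pg).natDegree ≤ k - 1 :=
      le_trans (Polynomial.natDegree_C_mul_le _ _) hpgdeg
    have h2 : (Polynomial.C (c 0) * ph).natDegree ≤ k - 1 :=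
      le_trans (Polynomial.natDegree_C_mul_le _ _) hphdeg
    have := Polynomial.natDegree_sub_le (Polynomial.C h0 * pg) (Polynomial.C (c 0) * ph)
    omega
  -- P = 0
  have hPzero : P = 0 := by
    apply Polynomial.eq_zero_of_natDegree_lt_card_of_eval_eq_zero' P s
    · intro i hi
      rw [hs] at hi
      rcases Finset.mem_insert.mp hi with h | h
      · rw [h]; exact hP0
      · obtain ⟨j, hj, hjt⟩ := Finset.mem_image.mp h
        obtain ⟨hjm, hj'⟩ := Finset.mem_erase.mp hj
        rw [← hjt]
        exact hProots j hj' hjm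
    · rw [hscard]; exact hPdeg
  -- h0 > 0
  have hh0pos : 0 < h0 := by
    rw [hh0]
    apply Finset.prod_pos
    intro j hj
    obtain ⟨hj1, hjk⟩ := Finset.mem_Icc.mp hj
    exact Real.sin_pos_of_pos_of_lt_pi (hApos j hj1) (hAltpi j hjk)
  -- main identity
  have hmain : ∀ α : ℝ, h0 * g α = c 0 * ∏ j ∈ Finset.Icc 1 k, Real.sin (A j - α) := by
    intro α
    by_cases hα : Real.cos α = 0
    · have hgα : g α = 0 := by
        rw [hg]
        apply Finset.sum_eq_zero
        intro j hj
        have hjk : j ≤ k := by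
          have := Finset.mem_range.mp hj; omega
        rcases eq_or_lt_of_le hjk with h | h
        · rw [h, hck]; ring
        · rw [hα, zero_pow (by omega : k - j ≠ 0)]; ring
      have hprod : (∏ j ∈ Finset.Icc 1 k, Real.sin (A j - α)) = 0 := by
        apply Finset.prod_eq_zero hmidmem
        rw [hAmid, Real.sin_pi_div_two_sub, hα]
      rw [hgα, hprod]; ring
    · have hev : P.eval (Real.tan α) = 0 := by rw [hPzero]; simp
      rw [hP] at hev
      simp only [Polynomial.eval_sub, Polynomial.eval_mul, Polynomial.eval_C] at hev
      rw [geq α hα, heqh α hα]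
      linear_combination (Real.cos α ^ k) * hev
  intro α
  have h1 := hmain α
  have hgoal : g α = (c 0 / h0) * ∏ j ∈ Finset.Icc 1 k, Real.sin (A j - α) := by
    rw [div_mul_eq_mul_div, eq_div_iff (ne_of_gt hh0pos)]
    linear_combination h1
  exact hgoal
end

section
/- Let k be an odd natural number, c_0, …, c_k real numbers with c_0 ≠ 0, and g(α) = Σ_{j=0}^{k} c_j (cos α)^{k−j} (sin α)^j. Suppose θ_1, …, θ_k are k pairwise distinct points of the open interval (0, π) with g(θ_j) = 0 for every j = 1, …, k. Then for all real α, g(α) = c_0 ∏_{j=1}^{k} ( sin(θ_j − α) / sin θ_j ). -/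
open Real Finset

theorem trig_poly_factorization_via_zeros (k : ℕ) (hk : Odd k) (c : ℕ → ℝ)
    (hc0 : c 0 ≠ 0)
    (g : ℝ → ℝ)
    (hg : ∀ α : ℝ, g α = ∑ j ∈ Finset.range (k + 1),
      c j * Real.cos α ^ (k - j) * Real.sin α ^ j)
    (θ : ℕ → ℝ)
    (hθmem : ∀ j : ℕ, 1 ≤ j → j ≤ k → θ j ∈ Set.Ioo 0 π)
    (hθdist : ∀ i j : ℕ, 1 ≤ i → i ≤ k → 1 ≤ j → j ≤ k → i ≠ j → θ i ≠ θ j)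
    (hθzero : ∀ j : ℕ, 1 ≤ j → j ≤ k → g (θ j) = 0) :
    ∀ α : ℝ, g α = c 0 * ∏ j ∈ Finset.Icc 1 k, (Real.sin (θ j - α) / Real.sin (θ j)) := by
  classical
  have hk1 : 1 ≤ k := hk.pos
  have hsinθ : ∀ j ∈ Finset.Icc 1 k, 0 < Real.sin (θ j) := by
    intro j hj
    obtain ⟨h1, h2⟩ := Finset.mem_Icc.mp hj
    exact Real.sin_pos_of_pos_of_lt_pi (hθmem j h1 h2).1 (hθmem j h1 h2).2
  set r : ℕ → ℝ := fun j => Real.cos (θ j) / Real.sin (θ j) with hrdef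
  set P : Polynomial ℝ := ∑ j ∈ Finset.range (k+1),
    Polynomial.C (c j) * Polynomial.X ^ (k - j) with hPdef
  set Q : Polynomial ℝ := Polynomial.C (c 0) *
    ∏ j ∈ Finset.Icc 1 k, (Polynomial.X - Polynomial.C (r j)) with hQdef
  -- fact A : for sin α ≠ 0
  have factA : ∀ α : ℝ, Real.sin α ≠ 0 →
      g α = Real.sin α ^ k * P.eval (Real.cos α / Real.sin α) := by
    intro α hα
    rw [hg, hPdef]
    simp only [Polynomial.eval_finset_sum, Polynomial.eval_mul, Polynomial.eval_C,
      Polynomial.eval_pow, Polynomial.eval_X, Finset.mul_sum]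
    refine Finset.sum_congr rfl fun j hj => ?_
    have hjk : j ≤ k := Nat.lt_succ_iff.mp (Finset.mem_range.mp hj)
    have hkj : k - j + j = k := Nat.sub_add_cancel hjk
    rw [div_pow, ← hkj, pow_add]
    field_simp
    rw [Nat.add_sub_cancel]
  -- fact B : roots
  have factB : ∀ j ∈ Finset.Icc 1 k, P.eval (r j) = 0 := by
    intro j hj
    obtain ⟨h1, h2⟩ := Finset.mem_Icc.mp hj
    have hs := (hsinθ j hj).ne'
    have := factA (θ j) hs
    rw [hθzero j h1 h2] at this
    have hpow : Real.sin (θ j) ^ k ≠ 0 := pow_ne_zero _ hs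
    exact (mul_eq_zero.mp this.symm).resolve_left hpow
  -- injectivity of r on Icc 1 k
  have hrinj : Set.InjOn r (Finset.Icc 1 k) := by
    intro i hi j hj hij
    by_contra hne
    obtain ⟨hi1, hi2⟩ := Finset.mem_Icc.mp (Finset.mem_coe.mp hi)
    obtain ⟨hj1, hj2⟩ := Finset.mem_Icc.mp (Finset.mem_coe.mp hj)
    have hθne : θ i ≠ θ j := hθdist i j hi1 hi2 hj1 hj2 hne
    have hsi := (hsinθ i (Finset.mem_Icc.mpr ⟨hi1, hi2⟩)).ne'
    have hsj := (hsinθ j (Finset.mem_Icc.mpr ⟨hj1, hj2⟩)).ne'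
    have hmi := hθmem i hi1 hi2
    have hmj := hθmem j hj1 hj2
    have hkey : Real.sin (θ j - θ i) = 0 := by
      rw [Real.sin_sub]
      have : Real.cos (θ i) * Real.sin (θ j) = Real.cos (θ j) * Real.sin (θ i) := by
        have h := hij
        simp only [hrdef] at h
        field_simp at h
        linarith [h]
      linarith [this]
    have h1 : -π < θ j - θ i := by linarith [hmi.2, hmj.1]
    have h2 : θ j - θ i < π := by linarith [hmi.1, hmj.2]
    have := (Real.sin_eq_zero_iff_of_lt_of_lt h1 h2).mp hkey
    exact hθne (by linarith)
  -- P = Q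
  have hPQ : P = Q := by
    have hM : (∏ j ∈ Finset.Icc 1 k, (Polynomial.X - Polynomial.C (r j))).Monic :=
      Polynomial.monic_prod_of_monic _ _ fun i _ => Polynomial.monic_X_sub_C _
    have hMdeg : (∏ j ∈ Finset.Icc 1 k,
        (Polynomial.X - Polynomial.C (r j))).natDegree = k := by
      rw [Polynomial.natDegree_prod_of_monic _ _ fun i _ => Polynomial.monic_X_sub_C _]
      simp [Nat.card_Icc]
    have hQdeg : Q.natDegree ≤ k := by
      rw [hQdef]
      exact (Polynomial.natDegree_C_mul_le _ _).trans hMdeg.le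
    have hPdeg : P.natDegree ≤ k := by
      rw [hPdef]
      refine Polynomial.natDegree_sum_le_of_forall_le _ _ fun i _ => ?_
      exact (Polynomial.natDegree_C_mul_le _ _).trans
        ((Polynomial.natDegree_X_pow _).le.trans (Nat.sub_le _ _))
    have hPcoeff : P.coeff k = c 0 := by
      rw [hPdef, Polynomial.finset_sum_coeff]
      rw [Finset.sum_eq_single 0]
      · simp
      · intro j hj hj0
        have hjk : j ≤ k := Nat.lt_succ_iff.mp (Finset.mem_range.mp hj)
        have : k - j ≠ k := by omega
        simp only [Polynomial.coeff_C_mul, Polynomial.coeff_X_pow]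
        rw [if_neg (by omega), mul_zero]
      · intro h; simp at h
    have hQcoeff : Q.coeff k = c 0 := by
      have h := hM.coeff_natDegree
      rw [hMdeg] at h
      rw [hQdef, Polynomial.coeff_C_mul, h, mul_one]
    set D : Polynomial ℝ := P - Q with hDdef
    have hD0 : D = 0 := by
      by_cases hD : D = 0
      · exact hD
      refine Polynomial.eq_zero_of_natDegree_lt_card_of_eval_eq_zero' D
        ((Finset.Icc 1 k).image r) ?_ ?_
      · intro t ht
        obtain ⟨j, hj, rfl⟩ := Finset.mem_image.mp ht
        rw [hDdef, Polynomial.eval_sub, factB j hj, hQdef]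
        simp only [Polynomial.eval_mul, Polynomial.eval_C, Polynomial.eval_prod,
          Polynomial.eval_sub, Polynomial.eval_X]
        rw [Finset.prod_eq_zero hj (by simp)]
        ring
      · rw [Finset.card_image_of_injOn hrinj, Nat.card_Icc]
        have hDcoeff : D.coeff k = 0 := by
          rw [hDdef, Polynomial.coeff_sub, hPcoeff, hQcoeff, sub_self]
        have hDle : D.natDegree ≤ k :=
          (Polynomial.natDegree_sub_le _ _).trans (max_le hPdeg hQdeg)
        have : D.natDegree ≠ k := by
          intro h
          exact hD (Polynomial.leadingCoeff_eq_zero.mp (by rwa [Polynomial.leadingCoeff, h]))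
        omega
    have := sub_eq_zero.mp hD0
    exact this
  -- finish
  intro α
  by_cases hsα : Real.sin α = 0
  · rw [hg]
    have hL : ∑ j ∈ Finset.range (k + 1),
        c j * Real.cos α ^ (k - j) * Real.sin α ^ j = c 0 * Real.cos α ^ k := by
      rw [Finset.sum_eq_single 0]
      · simp
      · intro j _ hj0
        rw [hsα, zero_pow hj0, mul_zero]
      · intro h; simp at h
    rw [hL]
    congr 1
    have : ∀ j ∈ Finset.Icc 1 k, Real.sin (θ j - α) / Real.sin (θ j) = Real.cos α := by
      intro j hj
      rw [Real.sin_sub, hsα, mul_zero, sub_zero, mul_comm,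
        mul_div_assoc, div_self (hsinθ j hj).ne', mul_one]
    rw [Finset.prod_congr rfl this, Finset.prod_const, Nat.card_Icc, Nat.add_sub_cancel]
  · rw [factA α hsα, hPQ, hQdef]
    simp only [Polynomial.eval_mul, Polynomial.eval_C, Polynomial.eval_prod,
      Polynomial.eval_sub, Polynomial.eval_X]
    have hpow : Real.sin α ^ k = ∏ _j ∈ Finset.Icc 1 k, Real.sin α := by
      rw [Finset.prod_const, Nat.card_Icc, Nat.add_sub_cancel]
    rw [hpow, mul_left_comm, ← Finset.prod_mul_distrib]
    congr 1
    refine Finset.prod_congr rfl fun j hj => ?_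
    have hsj := (hsinθ j hj).ne'
    rw [hrdef]
    rw [Real.sin_sub]
    field_simp
end

section
/- Let k be an odd natural number, c_0, …, c_k real numbers with c_0 > 0, and g(α) = Σ_{j=0}^{k} c_j (cos α)^{k−j} (sin α)^j. Assume g(α + 2π/k) = g(α) and g(2π − α) = g(α) for all real α. Then g(2πj/k) = g(0) > 0 and g(π/k + 2πj/k) = −g(0) < 0 for all j = 0, 1, …, (k−1)/2, and consequently for every j ∈ {1, …, k} there exists θ_j with (j−1)π/k < θ_j < jπ/k and g(θ_j) = 0. -/
open Real Finset

theorem trig_poly_sign_alternation_and_zeros (k : ℕ) (hk : Odd k) (c : ℕ → ℝ)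
    (hc0 : c 0 > 0)
    (g : ℝ → ℝ)
    (hg : ∀ α : ℝ, g α = ∑ j ∈ Finset.range (k + 1),
      c j * Real.cos α ^ (k - j) * Real.sin α ^ j)
    (hper : ∀ α : ℝ, g (α + 2 * π / k) = g α)
    (hsym : ∀ α : ℝ, g (2 * π - α) = g α) :
    (∀ j : ℕ, j ≤ (k - 1) / 2 →
        g (2 * π * (j : ℝ) / k) = g 0 ∧ g (π / k + 2 * π * (j : ℝ) / k) = - g 0) ∧
    g 0 > 0 ∧
    (∀ j : ℕ, 1 ≤ j → j ≤ k →
      ∃ θ : ℝ, ((j : ℝ) - 1) * π / k < θ ∧ θ < (j : ℝ) * π / k ∧ g θ = 0) := by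
  obtain ⟨t, ht⟩ := hk
  have hkpos : 0 < k := by omega
  have hk0 : (k : ℝ) ≠ 0 := Nat.cast_ne_zero.mpr hkpos.ne'
  have hkR : (k : ℝ) = 2 * t + 1 := by rw [ht]; push_cast; ring
  -- g 0 = c 0
  have hg0 : g 0 = c 0 := by
    rw [hg]
    rw [Finset.sum_eq_single 0]
    · simp
    · intro b _ hb; simp [zero_pow hb]
    · intro h; exact absurd (Finset.mem_range.mpr (by omega)) h
  -- antiperiodicity
  have hanti : ∀ α : ℝ, g (α + π) = - g α := by
    intro α
    rw [hg, hg, ← Finset.sum_neg_distrib]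
    refine Finset.sum_congr rfl ?_
    intro j hj
    have hj' : j ≤ k := by simpa [Nat.lt_succ_iff] using hj
    rw [Real.cos_add_pi, Real.sin_add_pi, neg_pow (Real.cos α) (k - j), neg_pow (Real.sin α) j]
    have : (-1 : ℝ) ^ (k - j) * (-1 : ℝ) ^ j = -1 := by
      rw [← pow_add, Nat.sub_add_cancel hj']
      exact Odd.neg_one_pow ⟨t, by omega⟩
    calc c j * ((-1 : ℝ) ^ (k - j) * Real.cos α ^ (k - j)) *
          ((-1 : ℝ) ^ j * Real.sin α ^ j)
        = ((-1 : ℝ) ^ (k - j) * (-1 : ℝ) ^ j) *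
          (c j * Real.cos α ^ (k - j) * Real.sin α ^ j) := by ring
      _ = -(c j * Real.cos α ^ (k - j) * Real.sin α ^ j) := by rw [this]; ring
  -- periodicity with natural multiples
  have hpern : ∀ (m : ℕ) (α : ℝ), g (α + 2 * π * m / k) = g α := by
    intro m
    induction m with
    | zero => intro α; simp
    | succ n ih =>
      intro α
      have h1 : α + 2 * π * (n + 1 : ℕ) / k = (α + 2 * π * n / k) + 2 * π / k := by
        push_cast; field_simp; ring
      rw [h1, hper, ih]
  -- half-step antiperiodicity
  have hstep : ∀ α : ℝ, g (α + π / k) = - g α := by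
    intro α
    have h1 := hpern t (α + π / k)
    have h2 : α + π / k + 2 * π * t / k = α + π := by
      field_simp [hkR]; rw [hkR]; ring
    rw [h2] at h1
    rw [← h1, hanti]
  -- values at multiples of π/k
  have hval : ∀ m : ℕ, g ((m : ℝ) * π / k) = (-1) ^ m * g 0 := by
    intro m
    induction m with
    | zero => simp
    | succ n ih =>
      have h1 : ((n + 1 : ℕ) : ℝ) * π / k = (n : ℝ) * π / k + π / k := by
        push_cast; ring
      rw [h1, hstep, ih, pow_succ]; ring
  have hgpos : g 0 > 0 := by rw [hg0]; exact hc0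
  -- continuity
  have hgc : Continuous g := by
    have : g = fun α => ∑ j ∈ Finset.range (k + 1),
        c j * Real.cos α ^ (k - j) * Real.sin α ^ j := funext hg
    rw [this]
    apply continuous_finset_sum
    intro i _
    fun_prop
  refine ⟨?_, hgpos, ?_⟩
  · intro j _
    constructor
    · have := hpern j 0
      simpa using this
    · have h1 : π / k + 2 * π * (j : ℝ) / k = ((2 * j + 1 : ℕ) : ℝ) * π / k := by
        push_cast; field_simp; ring
      rw [h1, hval]
      have : Odd (2 * j + 1) := ⟨j, by ring⟩
      rw [this.neg_one_pow]; ring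
  · intro j hj1 hjk
    have ha : ((j : ℝ) - 1) * π / k = ((j - 1 : ℕ) : ℝ) * π / k := by
      push_cast [hj1]; ring
    have hga : g (((j : ℝ) - 1) * π / k) = (-1) ^ (j - 1) * g 0 := by
      rw [ha, hval]
    have hgb : g ((j : ℝ) * π / k) = (-1) ^ j * g 0 := hval j
    have hab : ((j : ℝ) - 1) * π / k < (j : ℝ) * π / k := by
      have hπ : (0 : ℝ) < π := Real.pi_pos
      have hkR' : (0 : ℝ) < (k : ℝ) := by positivity
      exact div_lt_div_of_pos_right (by nlinarith) hkR'
    rcases Nat.even_or_odd j with hje | hjo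
    · -- j even : g a = -g0, g b = g0
      have hja : Odd (j - 1) := by
        rcases hje with ⟨m, hm⟩; exact ⟨m - 1, by omega⟩
      have hga' : g (((j : ℝ) - 1) * π / k) = - g 0 := by
        rw [hga, hja.neg_one_pow]; ring
      have hgb' : g ((j : ℝ) * π / k) = g 0 := by
        rw [hgb, hje.neg_one_pow]; ring
      have hsub := intermediate_value_Ioo hab.le hgc.continuousOn
      have h0 : (0 : ℝ) ∈ Set.Ioo (g (((j : ℝ) - 1) * π / k)) (g ((j : ℝ) * π / k)) := by
        rw [hga', hgb']; constructor <;> linarith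
      obtain ⟨θ, hθ, hθ0⟩ := hsub h0
      exact ⟨θ, hθ.1, hθ.2, hθ0⟩
    · -- j odd : g a = g0, g b = -g0
      have hja : Even (j - 1) := by
        rcases hjo with ⟨m, hm⟩; exact ⟨m, by omega⟩
      have hga' : g (((j : ℝ) - 1) * π / k) = g 0 := by
        rw [hga, hja.neg_one_pow]; ring
      have hgb' : g ((j : ℝ) * π / k) = - g 0 := by
        rw [hgb, hjo.neg_one_pow]; ring
      have hsub := intermediate_value_Ioo' hab.le hgc.continuousOn
      have h0 : (0 : ℝ) ∈ Set.Ioo (g ((j : ℝ) * π / k)) (g (((j : ℝ) - 1) * π / k)) := by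
        rw [hga', hgb']; constructor <;> linarith
      obtain ⟨θ, hθ, hθ0⟩ := hsub h0
      exact ⟨θ, hθ.1, hθ.2, hθ0⟩
end

section
/- Let k ≥ 1 be a natural number, R > 1 a real number, c ∈ ℂ, and υ: [1, R] → ℂ a continuous function, differentiable on (1, R), such that the function r ↦ r^{−k/2} υ(r) has derivative c·r^{−1−k} at every r ∈ (1, R), and such that υ(R) = √π · R^{k/2}. Then for every r ∈ [1, R], υ(r) = r^{k/2} (R^k √π − υ(1))/(R^k − 1) − r^{−k/2} R^k (√π − υ(1))/(R^k − 1). If moreover υ is differentiable at r = R (from the left), then υ'(R) = (k/2) R^{k/2 − 1} ((R^k + 1)√π − 2 υ(1)) / (R^k − 1). -/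
open Real Set

private theorem alg1 (a A s u v w : ℂ) (ha : a ≠ 0) (hA : A ≠ 0) (hS : A*A - 1 ≠ 0)
    (E : a⁻¹ * v + w * (a*a)⁻¹ = (A)⁻¹ * (s * A) + w * (A*A)⁻¹)
    (E1 : u + w = (A)⁻¹ * (s * A) + w * (A*A)⁻¹) :
    v = a * ((A*A) * s - u) / (A*A - 1) - a⁻¹ * (A*A) * (s - u) / (A*A - 1) := by
  have hne : a*a*((A*A)*(A*A-1)) ≠ 0 :=
    mul_ne_zero (mul_ne_zero ha ha) (mul_ne_zero (mul_ne_zero hA hA) hS)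
  have key : v = (a*a*((A*A)*s - u) - (A*A)*(s-u)) * ((A*A) * a) / (a*a*((A*A)*(A*A-1))) := by
    rw [eq_div_iff hne]
    field_simp at E E1
    linear_combination a*(A*A-1) * E - a*((A*A) - a*a) * E1
  rw [key]
  field_simp

private theorem alg2 (S E1 E2 s u kc : ℂ) (hS0 : S ≠ 0) (hS : S - 1 ≠ 0)
    (hE : E2 * S = E1) :
    (kc/2 * E1) * ((S*s - u)/(S-1)) - ((-(kc)/2) * E2) * (S * (s-u)/(S-1))
      = kc/2 * E1 * ((S+1)*s - 2*u) / (S-1) := by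
  rw [← hE]
  field_simp
  ring

theorem fourier_coefficient_ode (k : ℕ) (hk : 1 ≤ k) (R : ℝ) (hR : 1 < R)
    (c : ℂ) (υ : ℝ → ℂ)
    (hcont : ContinuousOn υ (Set.Icc 1 R))
    (hdiff : DifferentiableOn ℝ υ (Set.Ioo 1 R))
    (hode : ∀ r ∈ Set.Ioo (1 : ℝ) R,
      HasDerivAt (fun s : ℝ => (s ^ (-(k : ℝ) / 2) : ℝ) * υ s)
        (c * (r ^ (-1 - (k : ℝ)) : ℝ)) r)
    (hbc : υ R = (Real.sqrt π : ℝ) * (R ^ ((k : ℝ) / 2) : ℝ)) :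
    (∀ r ∈ Set.Icc (1 : ℝ) R,
      υ r = ((r ^ ((k : ℝ) / 2) : ℝ) : ℂ)
              * (((R ^ k : ℝ) : ℂ) * (Real.sqrt π : ℝ) - υ 1) / (((R ^ k : ℝ) : ℂ) - 1)
           - ((r ^ (-(k : ℝ) / 2) : ℝ) : ℂ)
              * ((R ^ k : ℝ) : ℂ) * ((Real.sqrt π : ℝ) - υ 1) / (((R ^ k : ℝ) : ℂ) - 1)) ∧
    (∀ d : ℂ, HasDerivWithinAt υ d (Set.Iic R) R →
      d = ((k : ℂ) / 2) * ((R ^ ((k : ℝ) / 2 - 1) : ℝ) : ℂ)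
            * ((((R ^ k : ℝ) : ℂ) + 1) * (Real.sqrt π : ℝ) - 2 * υ 1)
            / (((R ^ k : ℝ) : ℂ) - 1)) := by
  have hR0 : (0:ℝ) < R := lt_trans one_pos hR
  have hkR : (k:ℝ) ≠ 0 := Nat.cast_ne_zero.mpr (by omega)
  have hkC : (k:ℂ) ≠ 0 := Nat.cast_ne_zero.mpr (by omega)
  have hRk1 : (1:ℝ) < R ^ k := one_lt_pow₀ hR (by omega)
  have hRkC : ((R ^ k : ℝ) : ℂ) - 1 ≠ 0 := by
    intro h
    have h2 : ((R ^ k : ℝ) : ℂ) = ((1:ℝ) : ℂ) := by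
      rw [Complex.ofReal_one]; linear_combination h
    have := Complex.ofReal_injective h2
    linarith
  have hRkC0 : ((R ^ k : ℝ) : ℂ) ≠ 0 :=
    Complex.ofReal_ne_zero.mpr (by positivity)
  -- abbreviations
  set A : ℝ := R ^ ((k:ℝ)/2) with hAdef
  have hA0 : 0 < A := Real.rpow_pos_of_pos hR0 _
  have hAC : ((A:ℝ) : ℂ) ≠ 0 := Complex.ofReal_ne_zero.mpr hA0.ne'
  have hAA : (R ^ k : ℝ) = A * A := by
    rw [hAdef, ← Real.rpow_add hR0, ← Real.rpow_natCast R k]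
    norm_num
  have hRa : R ^ (-(k:ℝ)/2) = A⁻¹ := by
    rw [neg_div, Real.rpow_neg hR0.le, hAdef]
  have hRmk : R ^ (-(k:ℝ)) = (A*A)⁻¹ := by
    rw [Real.rpow_neg hR0.le, ← hAA, Real.rpow_natCast]
  have hSC : ((A:ℝ):ℂ) * ((A:ℝ):ℂ) - 1 ≠ 0 := by
    have := hRkC
    rw [hAA] at this
    push_cast at this
    exact this
  -- the auxiliary function g
  set g : ℝ → ℂ := fun r => ((r ^ (-(k : ℝ) / 2) : ℝ) : ℂ) * υ r
      + (c / k) * ((r ^ (-(k : ℝ)) : ℝ) : ℂ) with hg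
  -- g has derivative 0 on Ioo 1 R
  have hgderiv : ∀ r ∈ Set.Ioo (1:ℝ) R, HasDerivAt g 0 r := by
    intro r hr
    have hr0 : r ≠ 0 := by have := hr.1; positivity
    have h2 : HasDerivAt (fun s : ℝ => (c / k) * ((s ^ (-(k : ℝ)) : ℝ) : ℂ))
        ((c / k) * ((-(k:ℝ) * r ^ (-(k:ℝ) - 1) : ℝ) : ℂ)) r :=
      (((hasDerivAt_rpow_const (Or.inl hr0)).ofReal_comp)).const_mul _
    have hsum := (hode r hr).add h2
    have hexp : (-1 - (k:ℝ)) = -(k:ℝ) - 1 := by ring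
    rw [hexp] at hsum
    have hzero : c * ((r ^ (-(k:ℝ) - 1) : ℝ) : ℂ)
        + (c / k) * ((-(k:ℝ) * r ^ (-(k:ℝ) - 1) : ℝ) : ℂ) = 0 := by
      push_cast
      field_simp
      ring
    rw [hzero] at hsum
    exact hsum
  -- g is continuous on Icc 1 R
  have hgcont : ContinuousOn g (Set.Icc 1 R) := by
    have hrp : ∀ p : ℝ, ContinuousOn (fun r : ℝ => ((r ^ p : ℝ) : ℂ)) (Set.Icc 1 R) := by
      intro p
      apply Complex.continuous_ofReal.comp_continuousOn
      apply ContinuousOn.rpow_const continuousOn_id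
      intro x hx
      exact Or.inl (by have := hx.1; positivity)
    exact ((hrp _).mul hcont).add (continuousOn_const.mul (hrp _))
  -- g is constant, equal to g R, on Ioo 1 R
  have hIoo : ∀ a ∈ Set.Ioo (1:ℝ) R, g a = g R := by
    intro a ha
    have := constant_of_has_deriv_right_zero
      (f := g) (a := a) (b := R)
      (hgcont.mono (Icc_subset_Icc ha.1.le le_rfl))
      (fun x hx => ((hgderiv x ⟨lt_of_lt_of_le ha.1 hx.1, hx.2⟩).hasDerivWithinAt))
    exact (this R (right_mem_Icc.mpr ha.2.le)).symm
  -- g 1 = g R by continuity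
  have h1 : g 1 = g R := by
    have hne : (nhdsWithin (1:ℝ) (Set.Ioo 1 R)).NeBot := by
      apply mem_closure_iff_nhdsWithin_neBot.mp
      rw [closure_Ioo (ne_of_lt hR)]
      exact left_mem_Icc.mpr hR.le
    have ht1 : Filter.Tendsto g (nhdsWithin (1:ℝ) (Set.Ioo 1 R)) (nhds (g 1)) :=
      (hgcont 1 (left_mem_Icc.mpr hR.le)).mono Set.Ioo_subset_Icc_self
    have ht2 : Filter.Tendsto g (nhdsWithin (1:ℝ) (Set.Ioo 1 R)) (nhds (g R)) := by
      apply Filter.Tendsto.congr' _ tendsto_const_nhds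
      filter_upwards [self_mem_nhdsWithin] with x hx
      exact (hIoo x hx).symm
    exact tendsto_nhds_unique ht1 ht2
  have hconst : ∀ r ∈ Set.Icc (1:ℝ) R, g r = g R := by
    intro r hr
    rcases eq_or_lt_of_le hr.1 with h | h
    · rw [← h]; exact h1
    rcases eq_or_lt_of_le hr.2 with h' | h'
    · rw [h']
    exact hIoo r ⟨h, h'⟩
  -- the boundary-value equation at r = 1
  have E1 : υ 1 + c/(k:ℂ) = (((A:ℝ):ℂ))⁻¹ * ((Real.sqrt π : ℂ) * ((A:ℝ):ℂ))
      + (c/(k:ℂ)) * (((A:ℝ):ℂ) * ((A:ℝ):ℂ))⁻¹ := by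
    have h := hconst 1 (left_mem_Icc.mpr hR.le)
    rw [hg] at h
    simp only [Real.one_rpow] at h
    rw [hbc, hRa, hRmk] at h
    push_cast at h
    linear_combination h
  -- Part 1
  have part1 : ∀ r ∈ Set.Icc (1:ℝ) R,
      υ r = ((r ^ ((k : ℝ) / 2) : ℝ) : ℂ)
              * (((R ^ k : ℝ) : ℂ) * (Real.sqrt π : ℝ) - υ 1) / (((R ^ k : ℝ) : ℂ) - 1)
           - ((r ^ (-(k : ℝ) / 2) : ℝ) : ℂ)
              * ((R ^ k : ℝ) : ℂ) * ((Real.sqrt π : ℝ) - υ 1) / (((R ^ k : ℝ) : ℂ) - 1) := by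
    intro r hr
    have hr0 : (0:ℝ) < r := lt_of_lt_of_le one_pos hr.1
    set a : ℝ := r ^ ((k:ℝ)/2) with hadef
    have ha0 : 0 < a := Real.rpow_pos_of_pos hr0 _
    have haC : ((a:ℝ):ℂ) ≠ 0 := Complex.ofReal_ne_zero.mpr ha0.ne'
    have hra : r ^ (-(k:ℝ)/2) = a⁻¹ := by
      rw [neg_div, Real.rpow_neg hr0.le, hadef]
    have hrmk : r ^ (-(k:ℝ)) = (a*a)⁻¹ := by
      rw [hadef, ← Real.rpow_add hr0, ← Real.rpow_neg hr0.le]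
      norm_num
    have E : (((a:ℝ):ℂ))⁻¹ * υ r + (c/(k:ℂ)) * (((a:ℝ):ℂ) * ((a:ℝ):ℂ))⁻¹
        = (((A:ℝ):ℂ))⁻¹ * ((Real.sqrt π : ℂ) * ((A:ℝ):ℂ))
          + (c/(k:ℂ)) * (((A:ℝ):ℂ) * ((A:ℝ):ℂ))⁻¹ := by
      have h := hconst r hr
      rw [hg] at h
      simp only at h
      rw [hra, hrmk, hRa, hRmk, hbc] at h
      push_cast at h
      linear_combination h
    have key := alg1 ((a:ℝ):ℂ) ((A:ℝ):ℂ) (Real.sqrt π : ℂ) (υ 1) (υ r) (c/(k:ℂ))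
      haC hAC hSC E E1
    rw [hAA, hra]
    push_cast
    linear_combination key
  refine ⟨part1, ?_⟩
  -- Part 2
  intro d hd
  set C1 : ℂ := (((R ^ k : ℝ) : ℂ) * (Real.sqrt π : ℝ) - υ 1) / (((R ^ k : ℝ) : ℂ) - 1) with hC1
  set C2 : ℂ := ((R ^ k : ℝ) : ℂ) * (((Real.sqrt π : ℝ) : ℂ) - υ 1) / (((R ^ k : ℝ) : ℂ) - 1)
    with hC2
  set f : ℝ → ℂ := fun r => ((r ^ ((k:ℝ)/2) : ℝ) : ℂ) * C1 - ((r ^ (-(k:ℝ)/2) : ℝ) : ℂ) * C2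
    with hf
  have hfeq : ∀ r ∈ Set.Icc (1:ℝ) R, υ r = f r := by
    intro r hr
    rw [part1 r hr, hf]
    simp only
    rw [hC1, hC2]
    ring
  have hfd : HasDerivAt f
      ((((k:ℝ)/2 * R ^ ((k:ℝ)/2 - 1) : ℝ) : ℂ) * C1
        - (((-(k:ℝ)/2) * R ^ (-(k:ℝ)/2 - 1) : ℝ) : ℂ) * C2) R :=
    (((hasDerivAt_rpow_const (Or.inl hR0.ne')).ofReal_comp).mul_const C1).sub
      (((hasDerivAt_rpow_const (Or.inl hR0.ne')).ofReal_comp).mul_const C2)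
  have hmem : Set.Icc (1:ℝ) R ∈ nhdsWithin R (Set.Iic R) := by
    rw [show Set.Icc (1:ℝ) R = Set.Iic R ∩ Set.Ici 1 by
      rw [Set.inter_comm, Set.Ici_inter_Iic]]
    exact Filter.inter_mem self_mem_nhdsWithin
      (mem_nhdsWithin_of_mem_nhds (Ici_mem_nhds hR))
  have hfd' : HasDerivWithinAt υ
      ((((k:ℝ)/2 * R ^ ((k:ℝ)/2 - 1) : ℝ) : ℂ) * C1
        - (((-(k:ℝ)/2) * R ^ (-(k:ℝ)/2 - 1) : ℝ) : ℂ) * C2) (Set.Iic R) R :=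
    (hfd.hasDerivWithinAt).congr_of_eventuallyEq
      (by filter_upwards [hmem] with x hx; exact hfeq x hx)
      (hfeq R (right_mem_Icc.mpr hR.le))
  have hu : UniqueDiffWithinAt ℝ (Set.Iic R) R := (uniqueDiffOn_Iic R) R (Set.mem_Iic.mpr le_rfl)
  have hdD : d = (((k:ℝ)/2 * R ^ ((k:ℝ)/2 - 1) : ℝ) : ℂ) * C1
      - (((-(k:ℝ)/2) * R ^ (-(k:ℝ)/2 - 1) : ℝ) : ℂ) * C2 := by
    rw [← hd.derivWithin hu, hfd'.derivWithin hu]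
  have hE : ((R ^ (-(k:ℝ)/2 - 1) : ℝ) : ℂ) * ((R ^ k : ℝ) : ℂ)
      = ((R ^ ((k:ℝ)/2 - 1) : ℝ) : ℂ) := by
    have : R ^ (-(k:ℝ)/2 - 1) * R ^ k = R ^ ((k:ℝ)/2 - 1) := by
      rw [← Real.rpow_natCast R k, ← Real.rpow_add hR0]
      congr 1
      ring
    exact_mod_cast congrArg (fun x : ℝ => (x : ℂ)) this
  have key := alg2 ((R ^ k : ℝ) : ℂ) ((R ^ ((k:ℝ)/2 - 1) : ℝ) : ℂ)
    ((R ^ (-(k:ℝ)/2 - 1) : ℝ) : ℂ) (Real.sqrt π : ℂ) (υ 1) (k:ℂ) hRkC0 hRkC hE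
  rw [hdD, hC1, hC2]
  simp only [Complex.ofReal_mul, Complex.ofReal_div, Complex.ofReal_neg,
    Complex.ofReal_natCast, Complex.ofReal_ofNat]
  linear_combination key
end

section
/- Let k be an odd natural number, c_0, …, c_k real numbers with c_0 > 0, and g(α) = Σ_{j=0}^{k} c_j (cos α)^{k−j} (sin α)^j. Assume that g(α + 2π/k) = g(α) and g(2π − α) = g(α) for all real α. Then g(α) = c_0 cos(kα) for all real α. -/
open Real Finset

/-- If a polynomial function (given by coefficients on `range N`) vanishes
everywhere on `ℂ`, then all coefficients vanish. -/
lemma aux_coeffs_zero (N : ℕ) (q : ℕ → ℂ)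
    (h : ∀ z : ℂ, ∑ n ∈ Finset.range N, q n * z ^ n = 0) :
    ∀ n, n < N → q n = 0 := by
  intro n hn
  have hp : (∑ m ∈ Finset.range N, Polynomial.C (q m) * Polynomial.X ^ m) = 0 := by
    apply Polynomial.eq_zero_of_infinite_isRoot
    have hset : {x : ℂ | Polynomial.IsRoot
        (∑ m ∈ Finset.range N, Polynomial.C (q m) * Polynomial.X ^ m) x} = Set.univ := by
      ext z
      simp [Polynomial.IsRoot, Polynomial.eval_finset_sum, h z]
    rw [hset]
    exact Set.infinite_univ
  have h2 := congrArg (fun p => Polynomial.coeff p n) hp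
  simpa [Polynomial.finset_sum_coeff, Polynomial.coeff_C_mul, Polynomial.coeff_X_pow,
    Finset.sum_ite_eq, hn] using h2

theorem trig_poly_eq_cos (k : ℕ) (hk : Odd k) (c : ℕ → ℝ) (hc0 : c 0 > 0)
    (g : ℝ → ℝ)
    (hg : ∀ α : ℝ, g α = ∑ j ∈ Finset.range (k + 1),
      c j * Real.cos α ^ (k - j) * Real.sin α ^ j)
    (hper : ∀ α : ℝ, g (α + 2 * π / k) = g α)
    (hsym : ∀ α : ℝ, g (2 * π - α) = g α) :
    ∀ α : ℝ, g α = c 0 * Real.cos (k * α) := by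
  have hk1 : 1 ≤ k := hk.pos
  have hkR : (k : ℝ) ≠ 0 := Nat.cast_ne_zero.mpr (by omega)
  have hkC : (k : ℂ) ≠ 0 := Nat.cast_ne_zero.mpr (by omega)
  -- Basic periodicity facts for g
  have hg2π : ∀ α : ℝ, g (α + 2 * π) = g α := by
    intro α
    rw [hg, hg]
    simp [Real.cos_add_two_pi, Real.sin_add_two_pi]
  have hgπ : ∀ α : ℝ, g (α + π) = -g α := by
    intro α
    rw [hg (α + π), hg α, ← Finset.sum_neg_distrib]
    apply Finset.sum_congr rfl
    intro j hj
    have hj' : j ≤ k := Nat.lt_succ_iff.mp (Finset.mem_range.mp hj)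
    rw [Real.cos_add_pi, Real.sin_add_pi]
    have hne : ((-1 : ℝ)) ^ (k - j) * (-1 : ℝ) ^ j = -1 := by
      rw [← pow_add, Nat.sub_add_cancel hj', hk.neg_one_pow]
    have key : (-Real.cos α) ^ (k - j) * (-Real.sin α) ^ j
        = -(Real.cos α ^ (k - j) * Real.sin α ^ j) := by
      rw [neg_pow (Real.cos α) (k - j), neg_pow (Real.sin α) j]
      calc (-1 : ℝ) ^ (k - j) * Real.cos α ^ (k - j) * ((-1 : ℝ) ^ j * Real.sin α ^ j)
          = ((-1 : ℝ) ^ (k - j) * (-1 : ℝ) ^ j)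
            * (Real.cos α ^ (k - j) * Real.sin α ^ j) := by ring
        _ = -(Real.cos α ^ (k - j) * Real.sin α ^ j) := by rw [hne]; ring
    linear_combination c j * key
  have heven : ∀ α : ℝ, g (-α) = g α := by
    intro α
    have h1 := hsym α
    rw [show 2 * π - α = -α + 2 * π by ring, hg2π] at h1
    exact h1
  have hperN : ∀ (m : ℕ) (α : ℝ), g (α + m * (2 * π / k)) = g α := by
    intro m
    induction m with
    | zero => intro α; simp
    | succ n ih =>
      intro α
      have : α + (n + 1 : ℕ) * (2 * π / k) = (α + n * (2 * π / k)) + 2 * π / k := by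
        push_cast; ring
      rw [this, hper, ih]
  -- antiperiod π/k
  have hanti : ∀ α : ℝ, g (α + π / k) = -g α := by
    intro α
    obtain ⟨t, ht⟩ := hk
    have h1 := hperN t (α + π / k)
    have harg : α + π / k + t * (2 * π / k) = α + π := by
      have : (k : ℝ) = 2 * t + 1 := by rw [ht]; push_cast; ring
      field_simp [this]
      rw [this]; ring
    rw [harg] at h1
    rw [← h1, hgπ]
  -- Complex exponential facts
  have hinv : ∀ x : ℝ, Complex.exp (x * Complex.I) * Complex.exp (-x * Complex.I) = 1 := by
    intro x
    rw [← Complex.exp_add, show (x : ℂ) * Complex.I + -x * Complex.I = 0 by ring,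
      Complex.exp_zero]
  have hcos : ∀ t : ℝ, Complex.exp (t * Complex.I) ^ 2 + 1
      = 2 * Complex.exp (t * Complex.I) * Complex.cos (t : ℂ) := by
    intro t
    have h1 := Complex.two_cos (x := (t : ℂ))
    have h2 := hinv t
    linear_combination -Complex.exp ((t : ℂ) * Complex.I) * h1 - h2
  have hsin : ∀ t : ℝ, Complex.exp (t * Complex.I) ^ 2 - 1
      = 2 * Complex.I * Complex.exp (t * Complex.I) * Complex.sin (t : ℂ) := by
    intro t
    have h1 := Complex.two_sin (x := (t : ℂ))
    have h2 := hinv t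
    have hI : Complex.I * Complex.I = -1 := Complex.I_mul_I
    linear_combination -Complex.I * Complex.exp ((t : ℂ) * Complex.I) * h1 + h2
      + (Complex.exp ((t:ℂ) * Complex.I) ^ 2 - Complex.exp ((t:ℂ) * Complex.I)
        * Complex.exp (-(t:ℂ) * Complex.I)) * hI
  -- The polynomial Q
  set Q : Polynomial ℂ := ∑ j ∈ Finset.range (k + 1),
    Polynomial.C ((c j : ℂ) * (-Complex.I) ^ j) *
      (Polynomial.X ^ 2 + 1) ^ (k - j) * (Polynomial.X ^ 2 - 1) ^ j with hQdef
  have hQeval : ∀ t : ℝ, Q.eval (Complex.exp (t * Complex.I))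
      = 2 ^ k * Complex.exp (t * Complex.I) ^ k * (g t : ℂ) := by
    intro t
    rw [hQdef, Polynomial.eval_finset_sum]
    simp only [Polynomial.eval_mul, Polynomial.eval_pow, Polynomial.eval_add,
      Polynomial.eval_sub, Polynomial.eval_C, Polynomial.eval_X, Polynomial.eval_one]
    rw [hg t]
    push_cast
    rw [Finset.mul_sum]
    apply Finset.sum_congr rfl
    intro j hj
    have hj' : j ≤ k := Nat.lt_succ_iff.mp (Finset.mem_range.mp hj)
    rw [hcos t, hsin t]
    have h2 : (2 : ℂ) ^ (k - j) * 2 ^ j = 2 ^ k := by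
      rw [← pow_add, Nat.sub_add_cancel hj']
    have he : Complex.exp (t * Complex.I) ^ (k - j) * Complex.exp (t * Complex.I) ^ j
        = Complex.exp (t * Complex.I) ^ k := by
      rw [← pow_add, Nat.sub_add_cancel hj']
    have hI : (-Complex.I) ^ j * Complex.I ^ j = 1 := by
      rw [← mul_pow]
      simp
    calc (c j : ℂ) * (-Complex.I) ^ j
          * (2 * Complex.exp (t * Complex.I) * Complex.cos (t : ℂ)) ^ (k - j)
          * (2 * Complex.I * Complex.exp (t * Complex.I) * Complex.sin (t : ℂ)) ^ j
        = ((2 : ℂ) ^ (k - j) * 2 ^ j)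
            * (Complex.exp (t * Complex.I) ^ (k - j) * Complex.exp (t * Complex.I) ^ j)
            * ((-Complex.I) ^ j * Complex.I ^ j)
            * ((c j : ℂ) * Complex.cos (t : ℂ) ^ (k - j) * Complex.sin (t : ℂ) ^ j) := by
          simp only [mul_pow]; ring
      _ = 2 ^ k * Complex.exp (t * Complex.I) ^ k
            * ((c j : ℂ) * Complex.cos (t : ℂ) ^ (k - j) * Complex.sin (t : ℂ) ^ j) := by
          rw [h2, he, hI]; ring
  -- degree bound
  have hQdeg : Q.natDegree < 2 * k + 1 := by
    apply Nat.lt_succ_of_le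
    rw [hQdef]
    apply Polynomial.natDegree_sum_le_of_forall_le
    intro j hj
    have hj' : j ≤ k := Nat.lt_succ_iff.mp (Finset.mem_range.mp hj)
    have hd1 : (Polynomial.X ^ 2 + 1 : Polynomial ℂ).natDegree ≤ 2 := by
      refine (Polynomial.natDegree_add_le _ _).trans ?_
      simp [Polynomial.natDegree_X_pow]
    have hd2 : (Polynomial.X ^ 2 - 1 : Polynomial ℂ).natDegree ≤ 2 := by
      refine (Polynomial.natDegree_sub_le _ _).trans ?_
      simp [Polynomial.natDegree_X_pow]
    have b1 : ((Polynomial.X ^ 2 + 1 : Polynomial ℂ) ^ (k - j)).natDegree ≤ (k - j) * 2 :=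
      Polynomial.natDegree_pow_le.trans (Nat.mul_le_mul_left _ hd1)
    have b2 : ((Polynomial.X ^ 2 - 1 : Polynomial ℂ) ^ j).natDegree ≤ j * 2 :=
      Polynomial.natDegree_pow_le.trans (Nat.mul_le_mul_left _ hd2)
    have b3 : (Polynomial.C ((c j : ℂ) * (-Complex.I) ^ j)
        * (Polynomial.X ^ 2 + 1) ^ (k - j)).natDegree
        ≤ ((Polynomial.X ^ 2 + 1 : Polynomial ℂ) ^ (k - j)).natDegree :=
      Polynomial.natDegree_C_mul_le _ _
    have b4 : (Polynomial.C ((c j : ℂ) * (-Complex.I) ^ j) * (Polynomial.X ^ 2 + 1) ^ (k - j)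
        * (Polynomial.X ^ 2 - 1) ^ j).natDegree
        ≤ (Polynomial.C ((c j : ℂ) * (-Complex.I) ^ j)
            * (Polynomial.X ^ 2 + 1) ^ (k - j)).natDegree
          + ((Polynomial.X ^ 2 - 1 : Polynomial ℂ) ^ j).natDegree :=
      Polynomial.natDegree_mul_le
    omega
  set q : ℕ → ℂ := fun n => Q.coeff n with hqdef
  have hQz : ∀ z : ℂ, Q.eval z = ∑ n ∈ Finset.range (2 * k + 1), q n * z ^ n := by
    intro z
    exact Polynomial.eval_eq_sum_range' hQdeg z
  -- the rotation ω
  set ω : ℂ := Complex.exp ((π / k : ℝ) * Complex.I) with hωdef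
  have hωk : ω ^ k = -1 := by
    rw [hωdef, ← Complex.exp_nat_mul]
    rw [show (k : ℂ) * ((π / k : ℝ) * Complex.I) = (π : ℂ) * Complex.I by
      push_cast; field_simp]
    exact Complex.exp_pi_mul_I
  have hωe : ∀ t : ℝ, Complex.exp ((t + π / k : ℝ) * Complex.I)
      = ω * Complex.exp (t * Complex.I) := by
    intro t
    rw [hωdef, ← Complex.exp_add]
    congr 1
    push_cast
    ring
  have hcirc : ∀ t : ℝ, Q.eval (ω * Complex.exp (t * Complex.I))
      = Q.eval (Complex.exp (t * Complex.I)) := by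
    intro t
    rw [← hωe t, hQeval, hQeval, hanti t, hωe t, mul_pow, hωk]
    push_cast
    ring
  -- polynomial identity
  have hpoly : Q.comp (Polynomial.C ω * Polynomial.X) = Q := by
    apply Polynomial.eq_of_infinite_eval_eq
    apply Set.Infinite.mono
      (s := Set.range fun n : ℕ => Complex.exp (((1 / (n + 1) : ℝ)) * Complex.I))
    · rintro x ⟨n, rfl⟩
      simp only [Set.mem_setOf_eq, Polynomial.eval_comp, Polynomial.eval_mul,
        Polynomial.eval_C, Polynomial.eval_X]
      exact hcirc (1 / (n + 1))
    · apply Set.infinite_range_of_injective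
      intro n m hnm
      have hinj : ∀ a b : ℝ, a ∈ Set.Ioc (0 : ℝ) 1 → b ∈ Set.Ioc (0 : ℝ) 1 →
          Complex.exp (a * Complex.I) = Complex.exp (b * Complex.I) → a = b := by
        intro a b ha hb hab
        rw [Complex.exp_eq_exp_iff_exists_int] at hab
        obtain ⟨N, hN⟩ := hab
        have hN' : (a : ℂ) * Complex.I = ((b + N * (2 * π) : ℝ)) * Complex.I := by
          rw [hN]; push_cast; ring
        have hab' : a = b + N * (2 * π) :=
          Complex.ofReal_inj.mp (mul_right_cancel₀ Complex.I_ne_zero hN')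
        have hN0 : N = 0 := by
          by_contra hN0
          have h1 : (1 : ℝ) ≤ |(N : ℝ)| := by
            rw [← Int.cast_abs]
            exact_mod_cast Int.one_le_abs (by omega)
          have h2 : |a - b| < 1 := by
            rw [abs_lt]
            constructor <;> [nlinarith [ha.1, ha.2, hb.1, hb.2]; nlinarith [ha.1, ha.2, hb.1, hb.2]]
          have h3 : |a - b| = |(N : ℝ)| * (2 * π) := by
            rw [hab', show b + N * (2 * π) - b = N * (2 * π) by ring, abs_mul,
              abs_of_pos Real.two_pi_pos]
          have h4 : 1 * (2 * π) ≤ |(N : ℝ)| * (2 * π) :=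
            mul_le_mul_of_nonneg_right h1 (le_of_lt Real.two_pi_pos)
          nlinarith [Real.pi_gt_three]
        rw [hN0] at hab'
        simpa using hab'
      have hmem : ∀ n : ℕ, (1 / (n + 1) : ℝ) ∈ Set.Ioc (0 : ℝ) 1 := by
        intro n
        constructor
        · positivity
        · rw [div_le_one (by positivity)]
          linarith [Nat.cast_nonneg (α := ℝ) n]
      have := hinj _ _ (hmem n) (hmem m) hnm
      have hne : ((n : ℝ) + 1) ≠ 0 := by positivity
      have hne' : ((m : ℝ) + 1) ≠ 0 := by positivity
      field_simp at this
      exact_mod_cast (by linarith : (n : ℝ) = m)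
  have hall : ∀ z : ℂ, Q.eval (ω * z) = Q.eval z := by
    intro z
    calc Q.eval (ω * z) = (Q.comp (Polynomial.C ω * Polynomial.X)).eval z := by
          simp [Polynomial.eval_comp]
      _ = Q.eval z := by rw [hpoly]
  -- coefficient relations
  have hq : ∀ n, n < 2 * k + 1 → q n * ω ^ n - q n = 0 := by
    apply aux_coeffs_zero
    intro z
    have h1 := hall z
    rw [hQz, hQz] at h1
    calc ∑ n ∈ Finset.range (2 * k + 1), (q n * ω ^ n - q n) * z ^ n
        = (∑ n ∈ Finset.range (2 * k + 1), q n * (ω * z) ^ n)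
          - ∑ n ∈ Finset.range (2 * k + 1), q n * z ^ n := by
          rw [← Finset.sum_sub_distrib]
          apply Finset.sum_congr rfl
          intro n _
          rw [mul_pow]
          ring
      _ = 0 := by rw [h1, sub_self]
  have hmid : ∀ n, 0 < n → n < 2 * k → q n = 0 := by
    intro n hn0 hn2k
    have h1 := hq n (by omega)
    have hωn : ω ^ n ≠ 1 := by
      rw [hωdef, ← Complex.exp_nat_mul]
      intro hcon
      rw [Complex.exp_eq_one_iff] at hcon
      obtain ⟨m, hm⟩ := hcon
      have hm' : ((n * (π / k) : ℝ) : ℂ) * Complex.I = ((m * (2 * π) : ℝ) : ℂ) * Complex.I := by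
        push_cast at hm ⊢
        linear_combination hm
      have hm2 : (n : ℝ) * (π / k) = m * (2 * π) :=
        Complex.ofReal_inj.mp (mul_right_cancel₀ Complex.I_ne_zero hm')
      have hπ : (0 : ℝ) < π := Real.pi_pos
      have hm3 : (n : ℝ) = 2 * k * m := by
        field_simp at hm2
        nlinarith [hm2]
      have hm4 : (n : ℤ) = 2 * k * m := by exact_mod_cast hm3
      have hn' : 0 < (n : ℤ) := by exact_mod_cast hn0
      have hn'' : (n : ℤ) < 2 * k := by exact_mod_cast hn2k
      rcases le_or_gt m 0 with hm0 | hm0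
      · have h5 : (2 * (k : ℤ)) * m ≤ 0 :=
          mul_nonpos_of_nonneg_of_nonpos (by positivity) hm0
        nlinarith
      · have h5 : 2 * (k : ℤ) * 1 ≤ 2 * (k : ℤ) * m := by
          apply mul_le_mul_of_nonneg_left (by exact_mod_cast hm0) (by positivity)
        nlinarith
    have h2 : q n * (ω ^ n - 1) = 0 := by linear_combination h1
    rcases mul_eq_zero.mp h2 with h | h
    · exact h
    · exact absurd (by linear_combination h) hωn
  -- Q has only constant and top coefficient
  have heval2 : ∀ z : ℂ, Q.eval z = q 0 + q (2 * k) * z ^ (2 * k) := by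
    intro z
    rw [hQz]
    have hsub : ({0, 2 * k} : Finset ℕ) ⊆ Finset.range (2 * k + 1) := by
      intro x hx
      simp only [Finset.mem_insert, Finset.mem_singleton] at hx
      rcases hx with rfl | rfl <;> simp [Finset.mem_range] <;> omega
    rw [← Finset.sum_subset hsub]
    · rw [Finset.sum_pair (by omega : (0 : ℕ) ≠ 2 * k)]
      simp
    · intro x hx hx'
      simp only [Finset.mem_insert, Finset.mem_singleton, not_or] at hx'
      rw [Finset.mem_range] at hx
      rw [hmid x (by omega) (by omega)]
      ring
  -- symmetry gives q 0 = q (2k)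
  have hab : q 0 = q (2 * k) := by
    set t0 : ℝ := 1 / (2 * k) with ht0
    set u : ℂ := Complex.exp (t0 * Complex.I) with hu
    set v : ℂ := Complex.exp ((-t0 : ℝ) * Complex.I) with hv
    have huv : u * v = 1 := by
      rw [hu, hv]
      push_cast
      exact hinv t0
    have hrefl : Q.eval v * u ^ k = Q.eval u * v ^ k := by
      rw [hu, hv, hQeval, hQeval, heven t0]
      ring
    rw [heval2, heval2] at hrefl
    have hu2k : u ^ (2 * k) = Complex.exp ((1 : ℝ) * Complex.I) := by
      rw [hu, ← Complex.exp_nat_mul]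
      congr 1
      rw [ht0]
      push_cast
      field_simp
    have hune : u ^ (2 * k) ≠ 1 := by
      rw [hu2k]
      intro hcon
      rw [Complex.exp_eq_one_iff] at hcon
      obtain ⟨m, hm⟩ := hcon
      have hm' : ((1 : ℝ) : ℂ) * Complex.I = ((m * (2 * π) : ℝ) : ℂ) * Complex.I := by
        push_cast at hm ⊢
        linear_combination hm
      have hm2 : (1 : ℝ) = m * (2 * π) :=
        Complex.ofReal_inj.mp (mul_right_cancel₀ Complex.I_ne_zero hm')
      rcases le_or_gt m 0 with hm0 | hm0
      · have : (m : ℝ) ≤ 0 := by exact_mod_cast hm0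
        nlinarith [Real.pi_pos]
      · have : (1 : ℝ) ≤ (m : ℝ) := by exact_mod_cast hm0
        nlinarith [Real.pi_gt_three]
    -- multiply hrefl by u^k and use (uv)^k = 1
    have huvk : u ^ k * v ^ k = 1 := by rw [← mul_pow, huv, one_pow]
    have hvuk : v ^ (2 * k) * u ^ (2 * k) = 1 := by
      rw [← mul_pow, mul_comm v u, huv, one_pow]
    have hkey : (q 0 - q (2 * k)) * (u ^ (2 * k) - 1) = 0 := by
      have h1 : (q 0 + q (2 * k) * v ^ (2 * k)) * u ^ k * u ^ k
          = (q 0 + q (2 * k) * u ^ (2 * k)) * (v ^ k * u ^ k) := by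
        rw [hrefl]; ring
      rw [mul_comm (v ^ k) (u ^ k), huvk, mul_one] at h1
      have h2 : u ^ k * u ^ k = u ^ (2 * k) := by rw [← pow_add]; congr 1; omega
      rw [mul_assoc, h2] at h1
      linear_combination h1 - q (2 * k) * hvuk
    rcases mul_eq_zero.mp hkey with h | h
    · linear_combination h
    · exact absurd (by linear_combination h) hune
  -- g 0 = c 0
  have hg0 : g 0 = c 0 := by
    rw [hg]
    rw [Finset.sum_eq_single_of_mem 0 (Finset.mem_range.mpr (by omega))]
    · simp
    · intro j _ hj0
      simp [Real.sin_zero, zero_pow hj0]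
  -- final computation
  have hmain : ∀ t : ℝ, (2 : ℂ) ^ k * (g t : ℝ)
      = 2 * q 0 * Complex.cos ((((k : ℝ) * t : ℝ)) : ℂ) := by
    intro t
    have h1 := hQeval t
    rw [heval2, ← hab] at h1
    set s : ℝ := (k : ℝ) * t with hs
    set w : ℂ := Complex.exp ((s : ℝ) * Complex.I) with hw
    have hwk : Complex.exp (t * Complex.I) ^ k = w := by
      rw [hw, ← Complex.exp_nat_mul]
      congr 1
      rw [hs]
      push_cast
      ring
    have hw2 : Complex.exp (t * Complex.I) ^ (2 * k) = w ^ 2 := by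
      rw [mul_comm 2 k, pow_mul, hwk]
    rw [hwk, hw2] at h1
    -- h1 : q 0 + q 0 * w ^ 2 = 2 ^ k * w * g t
    have hcosw : 1 + w ^ 2 = w * (2 * Complex.cos ((s : ℝ) : ℂ)) := by
      have hc := Complex.two_cos (x := ((s : ℝ) : ℂ))
      have hiv := hinv s
      rw [hw]
      linear_combination -Complex.exp (((s : ℝ) : ℂ) * Complex.I) * hc - hiv
    have hwne : w ≠ 0 := Complex.exp_ne_zero _
    have h2 : w * ((2 : ℂ) ^ k * (g t : ℝ))
        = w * (2 * q 0 * Complex.cos ((s : ℝ) : ℂ)) := by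
      linear_combination -h1 + q 0 * hcosw
    exact mul_left_cancel₀ hwne h2
  intro α
  have h1 := hmain α
  have h0 := hmain 0
  rw [hg0] at h0
  simp only [mul_zero, Complex.ofReal_zero, Complex.cos_zero, mul_one] at h0
  have h2 : (2 : ℂ) ^ k * ((g α : ℝ) : ℂ)
      = 2 ^ k * (((c 0 * Real.cos ((k : ℝ) * α) : ℝ)) : ℂ) := by
    rw [h1, show ((c 0 * Real.cos ((k : ℝ) * α) : ℝ) : ℂ)
        = (c 0 : ℂ) * Complex.cos ((((k : ℝ) * α : ℝ)) : ℂ) by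
      rw [Complex.ofReal_mul, Complex.ofReal_cos]]
    linear_combination -Complex.cos ((((k : ℝ) * α : ℝ)) : ℂ) * h0
  have h3 : (2 : ℝ) ^ k * g α = 2 ^ k * (c 0 * Real.cos ((k : ℝ) * α)) := by
    exact_mod_cast h2
  have h2k : (2 : ℝ) ^ k ≠ 0 := by positivity
  exact mul_left_cancel₀ h2k h3
end

section
/- Let k be an odd natural number and g: ℝ → ℝ a function satisfying g(α + 2π/k) = g(α) and g(α + π) = −g(α) for all real α. Suppose that for each j ∈ {1, …, k} there is a unique zero θ_j of g in the open interval ((j−1)π/k, jπ/k). Then θ_j = θ₁ + (j−1)π/k for every j = 1, …, k. -/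
open Real

theorem zeros_equally_spaced (k : ℕ) (hk : Odd k) (g : ℝ → ℝ)
    (hper : ∀ α : ℝ, g (α + 2 * π / k) = g α)
    (hanti : ∀ α : ℝ, g (α + π) = - g α)
    (θ : ℕ → ℝ)
    (hθmem : ∀ j : ℕ, 1 ≤ j → j ≤ k →
      ((j : ℝ) - 1) * π / k < θ j ∧ θ j < (j : ℝ) * π / k)
    (hθzero : ∀ j : ℕ, 1 ≤ j → j ≤ k → g (θ j) = 0)
    (hθuniq : ∀ j : ℕ, 1 ≤ j → j ≤ k → ∀ x : ℝ,
      ((j : ℝ) - 1) * π / k < x → x < (j : ℝ) * π / k → g x = 0 → x = θ j) :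
    ∀ j : ℕ, 1 ≤ j → j ≤ k → θ j = θ 1 + ((j : ℝ) - 1) * π / k := by
  obtain ⟨m, hm⟩ := hk
  have hkpos : 0 < k := by omega
  have hk0 : (k : ℝ) ≠ 0 := Nat.cast_ne_zero.mpr hkpos.ne'
  -- iterated periodicity
  have hpern : ∀ (n : ℕ) (α : ℝ), g (α + n * (2 * π / k)) = g α := by
    intro n
    induction n with
    | zero => intro α; simp
    | succ n ih =>
      intro α
      have : α + (n + 1 : ℕ) * (2 * π / k) = (α + n * (2 * π / k)) + 2 * π / k := by
        push_cast; ring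
      rw [this, hper, ih]
  -- half-shift: g (α + π/k) = - g α
  have hshift : ∀ α : ℝ, g (α + π / k) = - g α := by
    intro α
    have h1 : α + π = (α + π / k) + m * (2 * π / k) := by
      have : (2 * m + 1 : ℝ) * (π / k) = π := by
        rw [show ((2 * m + 1 : ℝ)) = (k : ℝ) by push_cast [hm]; ring]
        field_simp
      linear_combination -this
    have := hpern m (α + π / k)
    rw [← h1] at this
    rw [← this, hanti]
  -- step lemma
  have hstep : ∀ j : ℕ, 1 ≤ j → j + 1 ≤ k → θ (j + 1) = θ j + π / k := by
    intro j hj1 hjk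
    obtain ⟨hlo, hhi⟩ := hθmem j hj1 (by omega)
    have hzero : g (θ j + π / k) = 0 := by
      rw [hshift, hθzero j hj1 (by omega), neg_zero]
    refine (hθuniq (j + 1) (by omega) hjk (θ j + π / k) ?_ ?_ hzero).symm
    · push_cast
      have hπ : 0 < π := Real.pi_pos
      have : ((j : ℝ) - 1) * π / k + π / k = ((j : ℝ) + 1 - 1) * π / k := by ring
      linarith [this ▸ add_lt_add_left hlo (π / k)]
    · push_cast
      have : (j : ℝ) * π / k + π / k = ((j : ℝ) + 1) * π / k := by ring
      linarith [this ▸ add_lt_add_left hhi (π / k)]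
  intro j
  induction j with
  | zero => intro h; omega
  | succ n ih =>
    intro h1 hk'
    rcases Nat.eq_or_lt_of_le h1 with h | h
    · simp [← h]
    · have hn1 : 1 ≤ n := by omega
      rw [hstep n hn1 hk', ih hn1 (by omega)]
      push_cast; ring
end

section
/- Let k be an odd natural number and g: ℝ → ℝ a function satisfying g(α + 2π/k) = g(α), g(α + π) = −g(α), and g(2π − α) = g(α) for all real α. Suppose that for each j ∈ {1, …, k} there is a unique zero θ_j of g in the open interval ((j−1)π/k, jπ/k), and that θ_j = θ₁ + (j−1)π/k for every j. Then θ₁ = π/(2k), and hence θ_j = (2j−1)π/(2k) for every j = 1, …, k. -/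
open Real

theorem first_zero_determined (k : ℕ) (hk : Odd k) (g : ℝ → ℝ)
    (hper : ∀ α : ℝ, g (α + 2 * π / k) = g α)
    (hanti : ∀ α : ℝ, g (α + π) = - g α)
    (hsym : ∀ α : ℝ, g (2 * π - α) = g α)
    (θ : ℕ → ℝ)
    (hθmem : ∀ j : ℕ, 1 ≤ j → j ≤ k →
      ((j : ℝ) - 1) * π / k < θ j ∧ θ j < (j : ℝ) * π / k)
    (hθzero : ∀ j : ℕ, 1 ≤ j → j ≤ k → g (θ j) = 0)
    (hθuniq : ∀ j : ℕ, 1 ≤ j → j ≤ k → ∀ x : ℝ,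
      ((j : ℝ) - 1) * π / k < x → x < (j : ℝ) * π / k → g x = 0 → x = θ j)
    (haligned : ∀ j : ℕ, 1 ≤ j → j ≤ k → θ j = θ 1 + ((j : ℝ) - 1) * π / k) :
    θ 1 = π / (2 * k) ∧
    ∀ j : ℕ, 1 ≤ j → j ≤ k → θ j = (2 * (j : ℝ) - 1) * π / (2 * k) := by
  have hk1 : 1 ≤ k := hk.pos
  have hkR : (k : ℝ) ≠ 0 := by positivity
  have hkpos : (0 : ℝ) < k := by positivity
  have hpern : ∀ (n : ℕ) (x : ℝ), g (x + n * (2 * π / k)) = g x := by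
    intro n
    induction n with
    | zero => intro x; simp
    | succ n ih =>
        intro x
        have : x + (n + 1 : ℕ) * (2 * π / k) = (x + n * (2 * π / k)) + 2 * π / k := by
          push_cast; ring
        rw [this, hper, ih]
  have hmem1 := hθmem 1 le_rfl hk1
  have h0 : (0:ℝ) < θ 1 := by
    have := hmem1.1; simpa using this
  have h1 : θ 1 < π / k := by
    have := hmem1.2; simpa using this
  have hz1 : g (θ 1) = 0 := hθzero 1 le_rfl hk1
  -- g(-θ1 + 2π/k) = 0
  have hz2 : g (-(θ 1) + 2 * π / k) = 0 := by
    have e : (-(θ 1) + 2 * π / k) + (k - 1 : ℕ) * (2 * π / k) = 2 * π - θ 1 := by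
      push_cast [Nat.cast_sub hk1]
      field_simp
      ring
    have := hpern (k - 1) (-(θ 1) + 2 * π / k)
    rw [e, hsym, hz1] at this
    exact this.symm
  have hpi : 0 < π := pi_pos
  have : θ 1 = π / (2 * k) := by
    rcases eq_or_lt_of_le hk1 with h | h2
    · -- k = 1
      have hk1' : k = 1 := h.symm
      subst hk1'
      have hz3 : g (π - θ 1) = 0 := by
        have := hanti (π - θ 1)
        have e : π - θ 1 + π = 2 * π - θ 1 := by ring
        rw [e, hsym, hz1] at this
        linarith [this]
      have := hθuniq 1 le_rfl le_rfl (π - θ 1) (by norm_num; linarith [h1]) 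
        (by norm_num; linarith) hz3
      push_cast at h1
      linarith [this]
    · -- k ≥ 2
      have h2' : 2 ≤ k := h2
      have key : (2:ℝ) * π / k - π / k = π / k := by ring
      have hb1 : ((2:ℝ) - 1) * π / k < -(θ 1) + 2 * π / k := by
        have : ((2:ℝ) - 1) * π / k = π / k := by ring
        rw [this]; linarith
      have hb2 : -(θ 1) + 2 * π / k < (2:ℝ) * π / k := by linarith
      have huniq := hθuniq 2 (by norm_num) h2' (-(θ 1) + 2 * π / k)
        (by push_cast; exact hb1) (by push_cast; exact hb2) hz2
      have hal := haligned 2 (by norm_num) h2'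
      rw [hal] at huniq
      push_cast at huniq
      have : θ 1 = π / (2 * k) := by
        field_simp at huniq ⊢
        linarith
      exact this
  refine ⟨this, ?_⟩
  intro j hj1 hjk
  rw [haligned j hj1 hjk, this]
  field_simp
  ring
end
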